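/- arXiv:1708.09061 — 9 statements merged into one kernel-verified Lean document; each statement's English description precedes it below -/
import Mathlib

section
/- Let γ < κ be infinite cardinals. Let c : [κ]^κ → γ be continuous, where [κ]^κ is given the topology Σ([κ]^{<γ}, [κ]^{<γ}) and γ is given the discrete topology (equivalently: for every X ∈ [κ]^κ there exist disjoint A, B ∈ [κ]^{<γ} with A ⊆ X, B ∩ X = ∅, and c constant on [A;B]). Then there is a set H ∈ [κ]^κ with |κ − H| ≤ γ such that c is constant on [H]^κ. Moreover, if γ is a regular cardinal, then H can be chosen so that |κ − H| < γ. -/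
open Set Cardinal

universe u

/-- `[κ]^κ`: the subsets of `κ` (viewed as the set of ordinals `< κ`) of cardinality `κ`
(equivalently, of order type `κ`). -/
def bigSets (κ : Cardinal.{0}) : Set (Set Ordinal.{0}) :=
  {X | X ⊆ Set.Iio κ.ord ∧ #X = Cardinal.lift.{1} κ}

/-- `[H]^κ`: the subsets of `H` of cardinality `κ`. -/
def subBig (κ : Cardinal.{0}) (H : Set Ordinal.{0}) : Set (Set Ordinal.{0}) :=
  {X | X ⊆ H ∧ #X = Cardinal.lift.{1} κ}

/-- `X` matches the pattern `(A,B)`: `A ⊆ X` and `B ∩ X = ∅`. -/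
def Matches (X A B : Set Ordinal.{0}) : Prop :=
  A ⊆ X ∧ B ∩ X = ∅

/-- `[A;B]`: the members of `[κ]^κ` matching the pattern `(A,B)`. -/
def patternSet (κ : Cardinal.{0}) (A B : Set Ordinal.{0}) : Set (Set Ordinal.{0}) :=
  {X ∈ bigSets κ | Matches X A B}

/-- `Σ(𝒜,ℬ)`: the subsets of `[κ]^κ` which are unions of sets `[A;B]` with
`A ∈ 𝒜`, `B ∈ ℬ`, `A ∩ B = ∅`. -/
def SigmaFam (κ : Cardinal.{0}) (𝒜 ℬ : Set (Set Ordinal.{0})) : Set (Set (Set Ordinal.{0})) :=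
  {S | ∃ Q : Set (Set Ordinal.{0} × Set Ordinal.{0}),
    (∀ p ∈ Q, p.1 ∈ 𝒜 ∧ p.2 ∈ ℬ ∧ Disjoint p.1 p.2) ∧
    S = {X ∈ bigSets κ | ∃ p ∈ Q, Matches X p.1 p.2}}

/-- `Δ(𝒜,ℬ)`: those `S` with both `S` and `[κ]^κ \ S` in `Σ(𝒜,ℬ)`. -/
def DeltaFam (κ : Cardinal.{0}) (𝒜 ℬ : Set (Set Ordinal.{0})) : Set (Set (Set Ordinal.{0})) :=
  {S | S ∈ SigmaFam κ 𝒜 ℬ ∧ bigSets κ \ S ∈ SigmaFam κ 𝒜 ℬ}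

/-- `[κ]^{<γ}`: subsets of `κ` of cardinality `< γ`. -/
def smallSets (κ γ : Cardinal.{0}) : Set (Set Ordinal.{0}) :=
  {A | A ⊆ Set.Iio κ.ord ∧ #A < Cardinal.lift.{1} γ}

/-- `[κ]^n`: `n`-element subsets of `κ`. -/
def nSets (κ : Cardinal.{0}) (n : ℕ) : Set (Set Ordinal.{0}) :=
  {A | A ⊆ Set.Iio κ.ord ∧ #A = n}

/-- `[κ]^{<ω}`: finite subsets of `κ`. -/
def finSets (κ : Cardinal.{0}) : Set (Set Ordinal.{0}) :=
  {A | A ⊆ Set.Iio κ.ord ∧ A.Finite}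

/-- `[κ]^ω`: subsets of `κ` of order type `ω`. -/
def omegaSets (κ : Cardinal.{0}) : Set (Set Ordinal.{0}) :=
  {A | A ⊆ Set.Iio κ.ord ∧ A.Infinite ∧ ∀ a ∈ A, (A ∩ Set.Iio a).Finite}

/-- `S ⊆ [κ]^κ` is Ramsey: some `H ∈ [κ]^κ` is homogeneous for `S`. -/
def IsRamsey (κ : Cardinal.{0}) (S : Set (Set Ordinal.{0})) : Prop :=
  ∃ H ∈ bigSets κ, subBig κ H ⊆ S ∨ subBig κ H ∩ S = ∅

noncomputable def chainE (f : Set Ordinal.{0} → Set Ordinal.{0}) : Ordinal.{0} → Set Ordinal.{0} :=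
  WellFounded.fix Ordinal.lt_wf fun j rec => ⋃ i : Set.Iio j, f (rec i.1 i.2)

lemma chainE_def (f : Set Ordinal.{0} → Set Ordinal.{0}) (j : Ordinal.{0}) :
    chainE f j = ⋃ i : Set.Iio j, f (chainE f i.1) := by
  unfold chainE
  rw [WellFounded.fix_eq]

lemma subset_chainE {f : Set Ordinal.{0} → Set Ordinal.{0}} {i j : Ordinal.{0}} (h : i < j) :
    f (chainE f i) ⊆ chainE f j := by
  rw [chainE_def f j]
  exact Set.subset_iUnion (fun i : Set.Iio j => f (chainE f i.1)) ⟨i, h⟩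

lemma chainE_card_le (γ : Cardinal.{0}) (hγ : ℵ₀ ≤ γ) (f : Set Ordinal.{0} → Set Ordinal.{0})
    (hf : ∀ E : Set Ordinal.{0}, #E ≤ Cardinal.lift.{1} γ → #(f E) ≤ Cardinal.lift.{1} γ) :
    ∀ j : Ordinal.{0}, j ≤ γ.ord → #(chainE f j) ≤ Cardinal.lift.{1} γ := by
  intro j
  induction j using Ordinal.induction with
  | h j IH =>
    intro hj
    rw [chainE_def]
    refine le_trans mk_iUnion_le_sum_mk ?_
    refine le_trans (Cardinal.sum_le_sum _ (fun _ => Cardinal.lift.{1} γ) ?_) ?_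
    · intro i
      exact hf _ (IH i.1 i.2 (le_of_lt (lt_of_lt_of_le i.2 hj)))
    · rw [Cardinal.sum_const']
      have h1 : #(Set.Iio j) ≤ Cardinal.lift.{1} γ := by
        rw [Ordinal.mk_Iio_ordinal]
        exact Cardinal.lift_le.mpr (by simpa using Ordinal.card_le_card hj)
      calc #(Set.Iio j) * Cardinal.lift.{1} γ
          ≤ Cardinal.lift.{1} γ * Cardinal.lift.{1} γ := mul_le_mul_left h1 _
        _ = Cardinal.lift.{1} γ := Cardinal.mul_eq_self (Cardinal.aleph0_le_lift.mpr hγ)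

lemma chainE_card_lt (γ : Cardinal.{0}) (hreg : γ.IsRegular) (f : Set Ordinal.{0} → Set Ordinal.{0})
    (hf : ∀ E : Set Ordinal.{0}, #E < Cardinal.lift.{1} γ → #(f E) < Cardinal.lift.{1} γ) :
    ∀ j : Ordinal.{0}, j < γ.ord → #(chainE f j) < Cardinal.lift.{1} γ := by
  have hregl : (Cardinal.lift.{1} γ).IsRegular := by
    refine ⟨Cardinal.aleph0_le_lift.mpr hreg.1, ?_⟩
    rw [← Cardinal.lift_ord, ← Ordinal.lift_cof]
    exact Cardinal.lift_le.mpr hreg.2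
  intro j
  induction j using Ordinal.induction with
  | h j IH =>
    intro hj
    rw [chainE_def]
    refine lt_of_le_of_lt mk_iUnion_le_sum_mk (Cardinal.sum_lt_of_isRegular hregl ?_ ?_)
    · rw [Ordinal.mk_Iio_ordinal]
      exact Cardinal.lift_lt.mpr (Cardinal.lt_ord.mp hj)
    · intro i
      exact hf _ (IH i.1 i.2 (i.2.trans hj))

lemma exists_good_index (γ : Cardinal.{0}) (P : Ordinal.{0} → Set Ordinal.{0})
    (hdisj : ∀ i j, i < j → j < γ.ord → P i ∩ P j = ∅)
    (B : Set Ordinal.{0}) (hB : #B < Cardinal.lift.{1} γ) :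
    ∃ j, j < γ.ord ∧ B ∩ P j = ∅ := by
  by_contra h
  push_neg at h
  have hmap : ∀ j : ↥(Set.Iio γ.ord), ∃ x, x ∈ B ∩ P j.1 :=
    fun j => h j.1 j.2
  choose g hg using hmap
  have hinj : Function.Injective (fun j : ↥(Set.Iio γ.ord) => (⟨g j, (hg j).1⟩ : ↥B)) := by
    intro j₁ j₂ hEq
    simp only [Subtype.mk.injEq] at hEq
    by_contra hne
    have hne' : j₁.1 ≠ j₂.1 := fun hh => hne (Subtype.ext hh)
    rcases hne'.lt_or_gt with hlt | hlt
    · have hx : g j₂ ∈ P j₁.1 ∩ P j₂.1 := ⟨hEq ▸ (hg j₁).2, (hg j₂).2⟩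
      rw [hdisj j₁.1 j₂.1 hlt j₂.2] at hx
      exact hx
    · have hx : g j₁ ∈ P j₂.1 ∩ P j₁.1 := ⟨hEq ▸ (hg j₂).2, (hg j₁).2⟩
      rw [hdisj j₂.1 j₁.1 hlt j₁.2] at hx
      exact hx
  have hle : #(Set.Iio γ.ord) ≤ #B := Cardinal.mk_le_of_injective hinj
  rw [Ordinal.mk_Iio_ordinal, Cardinal.card_ord] at hle
  exact absurd (hle.trans_lt hB) (lt_irrefl _)

lemma big_of_small_compl (κ : Cardinal.{0}) (hκ : ℵ₀ ≤ κ) (s : Set Ordinal.{0})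
    (hs : #s < Cardinal.lift.{1} κ) :
    (Set.Iio κ.ord \ s) ⊆ Set.Iio κ.ord ∧ #(Set.Iio κ.ord \ s : Set Ordinal.{0}) = Cardinal.lift.{1} κ := by
  refine ⟨Set.diff_subset, ?_⟩
  have hκ1 : ℵ₀ ≤ Cardinal.lift.{1} κ := Cardinal.aleph0_le_lift.mpr hκ
  have hK : #(Set.Iio κ.ord : Set Ordinal.{0}) = Cardinal.lift.{1} κ := by
    rw [Ordinal.mk_Iio_ordinal, Cardinal.card_ord]
  have h2 : #(s ∩ Set.Iio κ.ord : Set Ordinal.{0}) < Cardinal.lift.{1} κ :=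
    lt_of_le_of_lt (Cardinal.mk_le_mk_of_subset Set.inter_subset_left) hs
  have heqset : Set.Iio κ.ord \ (s ∩ Set.Iio κ.ord) = Set.Iio κ.ord \ s := by
    ext x; simp only [Set.mem_diff, Set.mem_inter_iff]; tauto
  have key := Cardinal.mk_diff_add_mk (S := Set.Iio κ.ord) (T := s ∩ Set.Iio κ.ord)
    Set.inter_subset_right
  rw [heqset, hK] at key
  have hle : #(Set.Iio κ.ord \ s : Set Ordinal.{0}) ≤ Cardinal.lift.{1} κ := by
    rw [← hK]; exact Cardinal.mk_le_mk_of_subset Set.diff_subset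
  rcases hle.lt_or_eq with hlt | heq
  · have := Cardinal.add_lt_of_lt hκ1 hlt h2
    rw [key] at this
    exact absurd this (lt_irrefl _)
  · exact heq

/-- Let `γ < κ` be infinite cardinals and let
`c : [κ]^κ → γ` be continuous for the `<γ`-box topology `Σ([κ]^{<γ},[κ]^{<γ})`
(equivalently: every `X ∈ [κ]^κ` matches a pattern `(A,B)` of disjoint sets in
`[κ]^{<γ}` with `c` constant on `[A;B]`).  Then there is `H ∈ [κ]^κ` with
`|κ - H| ≤ γ` on which `c` is constant; if moreover `γ` is regular, `H` can be
chosen with `|κ - H| < γ`. -/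
theorem statement0 (γ κ : Cardinal.{0}) (hγ : ℵ₀ ≤ γ) (hγκ : γ < κ)
    (c : Set Ordinal.{0} → Ordinal.{0})
    (hc_range : ∀ X ∈ bigSets κ, c X < γ.ord)
    (hc_cont : ∀ X ∈ bigSets κ, ∃ A ∈ smallSets κ γ, ∃ B ∈ smallSets κ γ,
      Disjoint A B ∧ A ⊆ X ∧ B ∩ X = ∅ ∧ ∀ Y ∈ patternSet κ A B, c Y = c X) :
    (∃ H ∈ bigSets κ, #(↥(Set.Iio κ.ord \ H)) ≤ Cardinal.lift.{1} γ ∧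
      ∀ X ∈ subBig κ H, ∀ Y ∈ subBig κ H, c X = c Y) ∧
    (γ.IsRegular → ∃ H ∈ bigSets κ, #(↥(Set.Iio κ.ord \ H)) < Cardinal.lift.{1} γ ∧
      ∀ X ∈ subBig κ H, ∀ Y ∈ subBig κ H, c X = c Y) := by
    classical
  -- abbreviations
  have hκ : ℵ₀ ≤ κ := hγ.trans hγκ.le
  have hγ1 : ℵ₀ ≤ Cardinal.lift.{1} γ := Cardinal.aleph0_le_lift.mpr hγ
  have hκ1 : ℵ₀ ≤ Cardinal.lift.{1} κ := Cardinal.aleph0_le_lift.mpr hκ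
  have hγκ1 : Cardinal.lift.{1} γ < Cardinal.lift.{1} κ := Cardinal.lift_lt.mpr hγκ
  have hbig : ∀ s : Set Ordinal.{0}, #s < Cardinal.lift.{1} κ →
      (Set.Iio κ.ord \ s) ∈ bigSets κ := by
    intro s hs
    exact big_of_small_compl κ hκ s hs
  -- choose the pattern functions
  have hcc : ∀ X : Set Ordinal.{0}, ∃ A B : Set Ordinal.{0}, X ∈ bigSets κ →
      (A ∈ smallSets κ γ ∧ B ∈ smallSets κ γ ∧ Disjoint A B ∧ A ⊆ X ∧ B ∩ X = ∅ ∧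
        ∀ Y ∈ patternSet κ A B, c Y = c X) := by
    intro X
    by_cases hX : X ∈ bigSets κ
    · obtain ⟨A, hA, B, hB, h1, h2, h3, h4⟩ := hc_cont X hX
      exact ⟨A, B, fun _ => ⟨hA, hB, h1, h2, h3, h4⟩⟩
    · exact ⟨∅, ∅, fun h => absurd h hX⟩
  choose pA pB hpat using hcc
  -- Lemma A: a set D of size ≤ γ off which c is constant
  set f : Set Ordinal.{0} → Set Ordinal.{0} :=
    fun E => pA (Set.Iio κ.ord \ E) ∪ pB (Set.Iio κ.ord \ E) with hf_def
  have hfle : ∀ E : Set Ordinal.{0}, #E ≤ Cardinal.lift.{1} γ →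
      #(f E) ≤ Cardinal.lift.{1} γ := by
    intro E hE
    have hXE : (Set.Iio κ.ord \ E) ∈ bigSets κ := hbig E (hE.trans_lt hγκ1)
    obtain ⟨hA, hB, -, -, -, -⟩ := hpat _ hXE
    exact le_of_lt (lt_of_le_of_lt (Cardinal.mk_union_le _ _)
      (Cardinal.add_lt_of_lt hγ1 hA.2 hB.2))
  have hchain_le : ∀ j : Ordinal.{0}, j ≤ γ.ord → #(chainE f j) ≤ Cardinal.lift.{1} γ :=
    chainE_card_le γ hγ f hfle
  set D : Set Ordinal.{0} := chainE f γ.ord with hD_def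
  have hDle : #D ≤ Cardinal.lift.{1} γ := hchain_le γ.ord le_rfl
  have hXsj : ∀ j : Ordinal.{0}, j ≤ γ.ord → (Set.Iio κ.ord \ chainE f j) ∈ bigSets κ :=
    fun j hj => hbig _ ((hchain_le j hj).trans_lt hγκ1)
  set P : Ordinal.{0} → Set Ordinal.{0} :=
    fun j => pA (Set.Iio κ.ord \ chainE f j) with hP_def
  set Q : Ordinal.{0} → Set Ordinal.{0} :=
    fun j => pB (Set.Iio κ.ord \ chainE f j) with hQ_def
  have hPdisj : ∀ i j, i < j → j < γ.ord → P i ∩ P j = ∅ := by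
    intro i j hij hj
    have h1 : P i ⊆ chainE f j :=
      Set.Subset.trans (Set.subset_union_left (s := P i) (t := Q i)) (subset_chainE (f := f) hij)
    have h2 : P j ⊆ Set.Iio κ.ord \ chainE f j := (hpat _ (hXsj j hj.le)).2.2.2.1
    ext x
    simp only [Set.mem_inter_iff, Set.mem_empty_iff_false, iff_false, not_and]
    intro hxi hxj
    exact (h2 hxj).2 (h1 hxi)
  have hQD : ∀ j, j < γ.ord → Q j ⊆ D := by
    intro j hj
    exact Set.Subset.trans (Set.subset_union_right (s := P j) (t := Q j)) (subset_chainE (f := f) hj)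
  have hkey : ∀ X ∈ bigSets κ, X ∩ D = ∅ → ∀ j, j < γ.ord → pB X ∩ P j = ∅ →
      c X = c (Set.Iio κ.ord \ chainE f j) := by
    intro X hX hXD j hj hBP
    obtain ⟨hAs, hBs, hABd, hAX, hBX, hconst⟩ := hpat X hX
    obtain ⟨hAs', hBs', hABd', hAX', hBX', hconst'⟩ := hpat _ (hXsj j hj.le)
    set Y : Set Ordinal.{0} := Set.Iio κ.ord \ (pB X ∪ Q j) with hY_def
    have hY : Y ∈ bigSets κ := hbig _ (lt_of_le_of_lt (Cardinal.mk_union_le _ _)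
      (Cardinal.add_lt_of_lt hκ1 (hBs.2.trans hγκ1) (hBs'.2.trans hγκ1)))
    have hYX : c Y = c X := by
      refine hconst Y ⟨hY, ?_, ?_⟩
      · intro x hx
        refine ⟨hX.1 (hAX hx), ?_⟩
        rintro (hx1 | hx2)
        · exact Set.disjoint_left.mp hABd hx hx1
        · have hxD : x ∈ X ∩ D := ⟨hAX hx, hQD j hj hx2⟩
          rw [hXD] at hxD
          exact hxD
      · ext x
        simp only [Set.mem_inter_iff, Set.mem_empty_iff_false, iff_false, not_and]
        intro hx1 hx2
        exact hx2.2 (Or.inl hx1)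
    have hYj : c Y = c (Set.Iio κ.ord \ chainE f j) := by
      refine hconst' Y ⟨hY, ?_, ?_⟩
      · intro x hx
        refine ⟨(hAX' hx).1, ?_⟩
        rintro (hx1 | hx2)
        · have hxe : x ∈ pB X ∩ P j := ⟨hx1, hx⟩
          rw [hBP] at hxe
          exact hxe
        · exact Set.disjoint_left.mp hABd' hx hx2
      · ext x
        simp only [Set.mem_inter_iff, Set.mem_empty_iff_false, iff_false, not_and]
        intro hx1 hx2
        exact hx2.2 (Or.inr hx1)
    rw [← hYX, hYj]
  have hconstD : ∀ X ∈ bigSets κ, X ∩ D = ∅ → ∀ X' ∈ bigSets κ, X' ∩ D = ∅ → c X = c X' := by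
    intro X hX hXD X' hX' hXD'
    obtain ⟨-, hBs, -, -, -, -⟩ := hpat X hX
    obtain ⟨-, hBs', -, -, -, -⟩ := hpat X' hX'
    have hBB : #(↥(pB X ∪ pB X')) < Cardinal.lift.{1} γ :=
      lt_of_le_of_lt (Cardinal.mk_union_le _ _) (Cardinal.add_lt_of_lt hγ1 hBs.2 hBs'.2)
    obtain ⟨j, hj, hgood⟩ := exists_good_index γ P hPdisj (pB X ∪ pB X') hBB
    have hg1 : pB X ∩ P j = ∅ :=
      Set.eq_empty_of_subset_empty
        ((Set.inter_subset_inter_left _ Set.subset_union_left).trans hgood.subset)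
    have hg2 : pB X' ∩ P j = ∅ :=
      Set.eq_empty_of_subset_empty
        ((Set.inter_subset_inter_left _ Set.subset_union_right).trans hgood.subset)
    rw [hkey X hX hXD j hj hg1, hkey X' hX' hXD' j hj hg2]
  -- from membership in subBig of the complement of D, get bigSets + disjointness
  have hsub : ∀ (s : Set Ordinal.{0}) (X : Set Ordinal.{0}),
      X ∈ subBig κ (Set.Iio κ.ord \ s) → X ∈ bigSets κ ∧ X ∩ s = ∅ := by
    intro s X hX
    obtain ⟨hX1, hX2⟩ := hX
    refine ⟨⟨hX1.trans Set.diff_subset, hX2⟩, ?_⟩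
    ext x
    simp only [Set.mem_inter_iff, Set.mem_empty_iff_false, iff_false, not_and]
    intro hx1 hx2
    exact (hX1 hx1).2 hx2
  constructor
  · -- Part 1
    refine ⟨Set.Iio κ.ord \ D, hbig D (hDle.trans_lt hγκ1), ?_, ?_⟩
    · have hss : Set.Iio κ.ord \ (Set.Iio κ.ord \ D) ⊆ D := by
        intro x hx
        by_contra hxD
        exact hx.2 ⟨hx.1, hxD⟩
      exact (Cardinal.mk_le_mk_of_subset hss).trans hDle
    · intro X hX Y hY
      obtain ⟨hXb, hXD⟩ := hsub D X hX
      obtain ⟨hYb, hYD⟩ := hsub D Y hY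
      exact hconstD X hXb hXD Y hYb hYD
  · -- Part 2
    intro hreg
    by_contra hcon
    push_neg at hcon
    have hKD : (Set.Iio κ.ord \ D) ∈ bigSets κ := hbig D (hDle.trans_lt hγκ1)
    set v : Ordinal.{0} := c (Set.Iio κ.ord \ D) with hv_def
    have hv : ∀ X ∈ bigSets κ, X ∩ D = ∅ → c X = v := by
      intro X hX hXD
      exact hconstD X hX hXD _ hKD (Set.diff_inter_self)
    -- witness function
    have hWex : ∀ E : Set Ordinal.{0}, ∃ X : Set Ordinal.{0}, #E < Cardinal.lift.{1} γ →
        (X ∈ bigSets κ ∧ X ∩ E = ∅ ∧ c X ≠ v) := by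
      intro E
      by_cases hE : #E < Cardinal.lift.{1} γ
      · have hH : (Set.Iio κ.ord \ E) ∈ bigSets κ := hbig E (hE.trans hγκ1)
        have hcompl : #(↥(Set.Iio κ.ord \ (Set.Iio κ.ord \ E))) < Cardinal.lift.{1} γ := by
          refine lt_of_le_of_lt (Cardinal.mk_le_mk_of_subset ?_) hE
          intro x hx
          by_contra hxE
          exact hx.2 ⟨hx.1, hxE⟩
        obtain ⟨X, hXs, Y, hYs, hne⟩ := hcon (Set.Iio κ.ord \ E) hH hcompl
        obtain ⟨hXb, hXE⟩ := hsub E X hXs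
        obtain ⟨hYb, hYE⟩ := hsub E Y hYs
        by_cases hvX : c X = v
        · exact ⟨Y, fun _ => ⟨hYb, hYE, fun hYv => hne (hvX.trans hYv.symm)⟩⟩
        · exact ⟨X, fun _ => ⟨hXb, hXE, hvX⟩⟩
      · exact ⟨∅, fun h => absurd h hE⟩
    choose W hWp using hWex
    set f' : Set Ordinal.{0} → Set Ordinal.{0} := fun E => pA (W E) ∪ pB (W E) with hf'_def
    have hf' : ∀ E : Set Ordinal.{0}, #E < Cardinal.lift.{1} γ →
        #(f' E) < Cardinal.lift.{1} γ := by
      intro E hE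
      obtain ⟨hWb, -, -⟩ := hWp E hE
      obtain ⟨hA, hB, -, -, -, -⟩ := hpat _ hWb
      exact lt_of_le_of_lt (Cardinal.mk_union_le _ _) (Cardinal.add_lt_of_lt hγ1 hA.2 hB.2)
    have hch' : ∀ j : Ordinal.{0}, j < γ.ord → #(chainE f' j) < Cardinal.lift.{1} γ :=
      chainE_card_lt γ hreg f' hf'
    have hW3 : ∀ j, j < γ.ord → (W (chainE f' j) ∈ bigSets κ ∧
        W (chainE f' j) ∩ chainE f' j = ∅ ∧ c (W (chainE f' j)) ≠ v) :=
      fun j hj => hWp _ (hch' j hj)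
    set P' : Ordinal.{0} → Set Ordinal.{0} := fun j => pA (W (chainE f' j)) with hP'_def
    set Q' : Ordinal.{0} → Set Ordinal.{0} := fun j => pB (W (chainE f' j)) with hQ'_def
    have hP'disj : ∀ i j, i < j → j < γ.ord → P' i ∩ P' j = ∅ := by
      intro i j hij hj
      have h1 : P' i ⊆ chainE f' j :=
        Set.Subset.trans (Set.subset_union_left (s := P' i) (t := Q' i)) (subset_chainE (f := f') hij)
      have h2 : P' j ⊆ W (chainE f' j) := (hpat _ (hW3 j hj).1).2.2.2.1
      ext x
      simp only [Set.mem_inter_iff, Set.mem_empty_iff_false, iff_false, not_and]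
      intro hxi hxj
      have hxe : x ∈ W (chainE f' j) ∩ chainE f' j := ⟨h2 hxj, h1 hxi⟩
      rw [(hW3 j hj).2.1] at hxe
      exact hxe
    set U : Set Ordinal.{0} := ⋃ i : ↥(Set.Iio γ.ord), Q' i.1 with hU_def
    have hUle : #U ≤ Cardinal.lift.{1} γ := by
      refine le_trans mk_iUnion_le_sum_mk ?_
      refine le_trans (Cardinal.sum_le_sum _ (fun _ => Cardinal.lift.{1} γ) ?_) ?_
      · intro i
        exact le_of_lt (hpat _ (hW3 i.1 i.2).1).2.1.2
      · rw [Cardinal.sum_const']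
        have h1 : #(Set.Iio γ.ord) = Cardinal.lift.{1} γ := by
          rw [Ordinal.mk_Iio_ordinal, Cardinal.card_ord]
        rw [h1, Cardinal.mul_eq_self hγ1]
    set Z : Set Ordinal.{0} := Set.Iio κ.ord \ (D ∪ U) with hZ_def
    have hZ : Z ∈ bigSets κ := hbig _ (lt_of_le_of_lt (Cardinal.mk_union_le _ _)
      (Cardinal.add_lt_of_lt hκ1 (hDle.trans_lt hγκ1) (hUle.trans_lt hγκ1)))
    have hZD : Z ∩ D = ∅ := by
      ext x
      simp only [Set.mem_inter_iff, Set.mem_empty_iff_false, iff_false, not_and]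
      intro hx1 hx2
      exact hx1.2 (Or.inl hx2)
    have hZv : c Z = v := hv Z hZ hZD
    obtain ⟨hAs, hBs, hABd, hAZ, hBZ, hconstZ⟩ := hpat Z hZ
    obtain ⟨j, hj, hgood⟩ := exists_good_index γ P' hP'disj (pB Z) hBs.2
    obtain ⟨hWb, hWE, hWv⟩ := hW3 j hj
    obtain ⟨hAs', hBs', hABd', hAX', hBX', hconst'⟩ := hpat _ hWb
    set Y : Set Ordinal.{0} := Set.Iio κ.ord \ (pB Z ∪ Q' j) with hY_def
    have hY : Y ∈ bigSets κ := hbig _ (lt_of_le_of_lt (Cardinal.mk_union_le _ _)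
      (Cardinal.add_lt_of_lt hκ1 (hBs.2.trans hγκ1) (hBs'.2.trans hγκ1)))
    have hYZ : c Y = c Z := by
      refine hconstZ Y ⟨hY, ?_, ?_⟩
      · intro x hx
        refine ⟨hZ.1 (hAZ hx), ?_⟩
        rintro (hx1 | hx2)
        · exact Set.disjoint_left.mp hABd hx hx1
        · exact (hAZ hx).2 (Or.inr (Set.mem_iUnion.mpr ⟨⟨j, hj⟩, hx2⟩))
      · ext x
        simp only [Set.mem_inter_iff, Set.mem_empty_iff_false, iff_false, not_and]
        intro hx1 hx2
        exact hx2.2 (Or.inl hx1)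
    have hYW : c Y = c (W (chainE f' j)) := by
      refine hconst' Y ⟨hY, ?_, ?_⟩
      · intro x hx
        refine ⟨hWb.1 (hAX' hx), ?_⟩
        rintro (hx1 | hx2)
        · have hxe : x ∈ pB Z ∩ P' j := ⟨hx1, hx⟩
          rw [hgood] at hxe
          exact hxe
        · exact Set.disjoint_left.mp hABd' hx hx2
      · ext x
        simp only [Set.mem_inter_iff, Set.mem_empty_iff_false, iff_false, not_and]
        intro hx1 hx2
        exact hx2.2 (Or.inr hx1)
    exact hWv ((hYW.symm.trans hYZ).trans hZv)
end

section
/- Let γ < κ be infinite cardinals. Then every set in Δ([κ]^{<γ}, [κ]^{<γ}) is Ramsey; in fact, for every 𝒮 ∈ Δ([κ]^{<γ}, [κ]^{<γ}) there is a set H ∈ [κ]^κ with |κ − H| ≤ γ such that either [H]^κ ⊆ 𝒮 or [H]^κ ∩ 𝒮 = ∅. -/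
open Set Cardinal

universe u

lemma aux_diff_big (κ : Cardinal.{0}) (hκ : ℵ₀ ≤ κ) (T : Set Ordinal.{0})
    (hT : #T < Cardinal.lift.{1} κ) :
    Set.Iio κ.ord \ T ⊆ Set.Iio κ.ord ∧ #(↥(Set.Iio κ.ord \ T)) = Cardinal.lift.{1} κ := by
  refine ⟨Set.diff_subset, ?_⟩
  have h0 : Set.Iio κ.ord \ T = Set.Iio κ.ord \ (T ∩ Set.Iio κ.ord) := by
    rw [Set.diff_inter_self_eq_diff]
  have h2 := Cardinal.mk_diff_add_mk (S := Set.Iio κ.ord) (T := T ∩ Set.Iio κ.ord)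
    Set.inter_subset_right
  rw [Ordinal.mk_Iio_ordinal, Cardinal.card_ord] at h2
  have hTi : #(↥(T ∩ Set.Iio κ.ord)) < Cardinal.lift.{1} κ :=
    lt_of_le_of_lt (Cardinal.mk_le_mk_of_subset Set.inter_subset_left) hT
  rw [h0, add_comm] at *
  exact Cardinal.eq_of_add_eq_of_aleph0_le h2 hTi (Cardinal.aleph0_le_lift.2 hκ)

lemma aux_union_small {γ : Cardinal.{1}} (hγ : ℵ₀ ≤ γ) {A B : Set Ordinal.{0}}
    (hA : #A < γ) (hB : #B < γ) : #(↥(A ∪ B)) < γ :=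
  lt_of_le_of_lt (Cardinal.mk_union_le A B) (Cardinal.add_lt_of_lt hγ hA hB)

/-- Let `γ < κ` be infinite cardinals.  Every
`𝒮 ∈ Δ([κ]^{<γ}, [κ]^{<γ})` is Ramsey; in fact there is `H ∈ [κ]^κ` with
`|κ - H| ≤ γ` such that `[H]^κ ⊆ 𝒮` or `[H]^κ ∩ 𝒮 = ∅`. -/
theorem statement1 (γ κ : Cardinal.{0}) (hγ : ℵ₀ ≤ γ) (hγκ : γ < κ)
    (S : Set (Set Ordinal.{0}))
    (hS : S ∈ DeltaFam κ (smallSets κ γ) (smallSets κ γ)) :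
    ∃ H ∈ bigSets κ, #(↥(Set.Iio κ.ord \ H)) ≤ Cardinal.lift.{1} γ ∧
      (subBig κ H ⊆ S ∨ subBig κ H ∩ S = ∅) := by
  classical
  obtain ⟨⟨Q, hQ, hSQ⟩, ⟨Q', hQ', hSQ'⟩⟩ := hS
  have hκ : ℵ₀ ≤ κ := le_of_lt (lt_of_le_of_lt hγ hγκ)
  have hγκ' : Cardinal.lift.{1} γ < Cardinal.lift.{1} κ := Cardinal.lift_lt.2 hγκ
  have hγ' : ℵ₀ ≤ Cardinal.lift.{1} γ := Cardinal.aleph0_le_lift.2 hγ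
  -- the cross-intersection lemma
  have cross : ∀ p ∈ Q, ∀ p' ∈ Q', (p.1 ∩ p'.2).Nonempty ∨ (p'.1 ∩ p.2).Nonempty := by
    intro p hp p' hp'
    by_contra hcon
    push_neg at hcon
    obtain ⟨h1, h2⟩ := hcon
    obtain ⟨hA, hB, hd⟩ := hQ p hp
    obtain ⟨hA', hB', hd'⟩ := hQ' p' hp'
    set X := Set.Iio κ.ord \ (p.2 ∪ p'.2) with hXdef
    have hXbig : X ∈ bigSets κ :=
      aux_diff_big κ hκ _ (lt_trans (aux_union_small hγ' hB.2 hB'.2) hγκ')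
    have hm : Matches X p.1 p.2 := by
      constructor
      · intro a ha
        refine ⟨hA.1 ha, ?_⟩
        rintro (hab | hab)
        · exact (Set.disjoint_left.1 hd) ha hab
        · exact Set.eq_empty_iff_forall_notMem.1 h1 a ⟨ha, hab⟩
      · apply Set.eq_empty_iff_forall_notMem.2
        rintro a ⟨ha, _, hna⟩
        exact hna (Or.inl ha)
    have hm' : Matches X p'.1 p'.2 := by
      constructor
      · intro a ha
        refine ⟨hA'.1 ha, ?_⟩
        rintro (hab | hab)
        · exact Set.eq_empty_iff_forall_notMem.1 h2 a ⟨ha, hab⟩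
        · exact (Set.disjoint_left.1 hd') ha hab
      · apply Set.eq_empty_iff_forall_notMem.2
        rintro a ⟨ha, _, hna⟩
        exact hna (Or.inr ha)
    have hXS : X ∈ S := by rw [hSQ]; exact ⟨hXbig, p, hp, hm⟩
    have hXS' : X ∈ bigSets κ \ S := by rw [hSQ']; exact ⟨hXbig, p', hp', hm'⟩
    exact hXS'.2 hXS
  by_cases hgood : ∃ C : Set Ordinal.{0}, #C ≤ Cardinal.lift.{1} γ ∧
      ((∀ p ∈ Q, (p.1 ∩ C).Nonempty) ∨ (∀ p' ∈ Q', (p'.1 ∩ C).Nonempty))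
  · obtain ⟨C, hC, hside⟩ := hgood
    have hHbig := aux_diff_big κ hκ C (lt_of_le_of_lt hC hγκ')
    refine ⟨Set.Iio κ.ord \ C, hHbig, ?_, ?_⟩
    · have : Set.Iio κ.ord \ (Set.Iio κ.ord \ C) = Set.Iio κ.ord ∩ C :=
        Set.diff_diff_right_self _ _
      rw [this]
      exact le_trans (Cardinal.mk_le_mk_of_subset Set.inter_subset_right) hC
    · rcases hside with hside | hside
      · right
        apply Set.eq_empty_iff_forall_notMem.2
        rintro X ⟨⟨hXH, hXκ⟩, hXS⟩
        rw [hSQ] at hXS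
        obtain ⟨-, p, hp, hm⟩ := hXS
        obtain ⟨a, haA, haC⟩ := hside p hp
        exact (hXH (hm.1 haA)).2 haC
      · left
        rintro X ⟨hXH, hXκ⟩
        have hXbig : X ∈ bigSets κ := ⟨hXH.trans Set.diff_subset, hXκ⟩
        by_contra hXS
        have : X ∈ bigSets κ \ S := ⟨hXbig, hXS⟩
        rw [hSQ'] at this
        obtain ⟨-, p', hp', hm'⟩ := this
        obtain ⟨a, haA, haC⟩ := hside p' hp'
        exact (hXH (hm'.1 haA)).2 haC
  · exfalso
    push_neg at hgood
    set PP := (Set Ordinal.{0} × Set Ordinal.{0}) × (Set Ordinal.{0} × Set Ordinal.{0}) with hPP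
    have hBad : ∀ C : Set Ordinal.{0}, #C ≤ Cardinal.lift.{1} γ →
        ∃ pp : PP, pp.1 ∈ Q ∧ pp.2 ∈ Q' ∧ pp.1.1 ∩ C = ∅ ∧ pp.2.1 ∩ C = ∅ := by
      intro C hC
      obtain ⟨⟨p, hp, hpC⟩, ⟨p', hp', hpC'⟩⟩ := hgood C hC
      exact ⟨⟨p, p'⟩, hp, hp', hpC, hpC'⟩
    let Bad : Set Ordinal.{0} → Prop := fun C =>
      ∃ pp : PP, pp.1 ∈ Q ∧ pp.2 ∈ Q' ∧ pp.1.1 ∩ C = ∅ ∧ pp.2.1 ∩ C = ∅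
    let pk : Set Ordinal.{0} → PP := fun C => if h : Bad C then h.choose else ⟨⟨∅, ∅⟩, ∅, ∅⟩
    have hpk : ∀ C, Bad C → (pk C).1 ∈ Q ∧ (pk C).2 ∈ Q' ∧
        (pk C).1.1 ∩ C = ∅ ∧ (pk C).2.1 ∩ C = ∅ := by
      intro C h
      simp only [pk, dif_pos h]
      exact h.choose_spec
    let supp : PP → Set Ordinal.{0} := fun pp => pp.1.1 ∪ pp.1.2 ∪ pp.2.1 ∪ pp.2.2
    let F : Ordinal.{0} → Set Ordinal.{0} := WellFounded.fix Ordinal.lt_wf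
      (fun α ih => ⋃ β : ↥(Set.Iio α), supp (pk (ih β.1 β.2)))
    have hF : ∀ α, F α = ⋃ β : ↥(Set.Iio α), supp (pk (F β.1)) := fun α =>
      WellFounded.fix_eq _ _ _
    have hFsupp : ∀ {β α : Ordinal.{0}}, β < α → supp (pk (F β)) ⊆ F α := by
      intro β α h
      rw [hF α]
      exact Set.subset_iUnion (fun δ : ↥(Set.Iio α) => supp (pk (F δ.1))) ⟨β, h⟩
    have hcard : ∀ α : Ordinal.{0}, α ≤ γ.ord → #(F α) ≤ Cardinal.lift.{1} γ := by
      intro α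
      induction α using Ordinal.induction with
      | h α IH =>
        intro hα
        rw [hF α]
        refine le_trans (Cardinal.mk_iUnion_le _) ?_
        have h1 : #(↥(Set.Iio α)) ≤ Cardinal.lift.{1} γ := by
          rw [Ordinal.mk_Iio_ordinal]
          exact Cardinal.lift_le.2 (le_of_le_of_eq (Ordinal.card_le_card hα) (Cardinal.card_ord γ))
        have h2 : (⨆ β : ↥(Set.Iio α), #(↥(supp (pk (F β.1))))) ≤ Cardinal.lift.{1} γ := by
          apply ciSup_le'
          intro β
          have hβγ : β.1 ≤ γ.ord := le_of_lt (lt_of_lt_of_le β.2 hα)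
          obtain ⟨hq, hq', -, -⟩ := hpk _ (hBad _ (IH β.1 β.2 hβγ))
          obtain ⟨⟨-, s1⟩, ⟨-, s2⟩, -⟩ := hQ _ hq
          obtain ⟨⟨-, s3⟩, ⟨-, s4⟩, -⟩ := hQ' _ hq'
          exact le_of_lt (aux_union_small hγ' (aux_union_small hγ'
            (aux_union_small hγ' s1 s2) s3) s4)
        calc #(↥(Set.Iio α)) * (⨆ β : ↥(Set.Iio α), #(↥(supp (pk (F β.1)))))
            ≤ Cardinal.lift.{1} γ * Cardinal.lift.{1} γ := mul_le_mul' h1 h2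
          _ = Cardinal.lift.{1} γ := Cardinal.mul_eq_self hγ'
    have hGbad := hBad (F γ.ord) (hcard _ le_rfl)
    obtain ⟨hpQ, hpQ', hpA, -⟩ := hpk _ hGbad
    have hx : ∀ β : ↥(Set.Iio γ.ord), ∃ a, a ∈ (pk (F β.1)).2.1 ∩ (pk (F γ.ord)).1.2 := by
      intro β
      have hβbad := hBad (F β.1) (hcard _ (le_of_lt β.2))
      obtain ⟨hq, hq', hqa, hqa'⟩ := hpk _ hβbad
      rcases cross _ hpQ _ hq' with h | h
      · exfalso
        obtain ⟨a, ha1, ha2⟩ := h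
        have : a ∈ F γ.ord := hFsupp β.2 (Or.inr ha2)
        exact Set.eq_empty_iff_forall_notMem.1 hpA a ⟨ha1, this⟩
      · exact h
    choose x hx using hx
    have hinj : Function.Injective
        (fun β : ↥(Set.Iio γ.ord) => (⟨x β, (hx β).2⟩ : ↥(pk (F γ.ord)).1.2)) := by
      intro β1 β2 h
      simp only [Subtype.mk.injEq] at h
      by_contra hne
      have hne' : β1.1 ≠ β2.1 := fun he => hne (Subtype.ext he)
      rcases hne'.lt_or_gt with hlt | hlt
      · have h1 : x β1 ∈ F β2.1 := hFsupp hlt (Or.inl (Or.inr (hx β1).1))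
        have hβbad := hBad (F β2.1) (hcard _ (le_of_lt β2.2))
        obtain ⟨-, -, -, hqa'⟩ := hpk _ hβbad
        exact Set.eq_empty_iff_forall_notMem.1 hqa' (x β2) ⟨(hx β2).1, h ▸ h1⟩
      · have h1 : x β2 ∈ F β1.1 := hFsupp hlt (Or.inl (Or.inr (hx β2).1))
        have hβbad := hBad (F β1.1) (hcard _ (le_of_lt β1.2))
        obtain ⟨-, -, -, hqa'⟩ := hpk _ hβbad
        exact Set.eq_empty_iff_forall_notMem.1 hqa' (x β1) ⟨(hx β1).1, h ▸ h1⟩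
    have hle : Cardinal.lift.{1} γ ≤ #(↥(pk (F γ.ord)).1.2) := by
      have := Cardinal.mk_le_of_injective hinj
      rwa [Ordinal.mk_Iio_ordinal, Cardinal.card_ord] at this
    exact absurd (lt_of_le_of_lt hle (hQ _ hpQ).2.1.2) (lt_irrefl _)
end

section
/- Let γ < κ be infinite cardinals and let λ < κ be a cardinal. For any family {𝒮_i : i < λ} of sets each belonging to Δ([κ]^{<γ}, [κ]^{<γ}), there is a single set H ∈ [κ]^κ that is simultaneously homogeneous for every 𝒮_i, i.e., for each i < λ, either [H]^κ ⊆ 𝒮_i or [H]^κ ∩ 𝒮_i = ∅. -/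
open Set Cardinal

universe u

/-! ### Auxiliary machinery for the proof -/

lemma mk_Iio_ord (c : Cardinal.{0}) : #(Set.Iio c.ord) = Cardinal.lift.{1} c := by
  rw [Ordinal.mk_Iio_ordinal, Cardinal.card_ord]

lemma small_union_aux {γ : Cardinal.{0}} (hγ : ℵ₀ ≤ γ) {A B : Set Ordinal.{0}}
    (hA : #A < Cardinal.lift.{1} γ) (hB : #B < Cardinal.lift.{1} γ) :
    #(A ∪ B : Set Ordinal.{0}) < Cardinal.lift.{1} γ :=
  lt_of_le_of_lt (mk_union_le _ _)
    (Cardinal.add_lt_of_lt (Cardinal.aleph0_le_lift.mpr hγ) hA hB)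

/-- A subset of `Iio κ.ord` containing the complement of a small set is big. -/
lemma big_of_superset {κ : Cardinal.{0}} (hκ : ℵ₀ ≤ κ) {B Z : Set Ordinal.{0}}
    (hZ : Z ⊆ Set.Iio κ.ord) (hB : #B < Cardinal.lift.{1} κ)
    (hsub : Set.Iio κ.ord \ B ⊆ Z) : Z ∈ bigSets κ := by
  refine ⟨hZ, le_antisymm ((mk_le_mk_of_subset hZ).trans (mk_Iio_ord κ).le) ?_⟩
  by_contra hlt
  push_neg at hlt
  have h1 : Set.Iio κ.ord ⊆ Z ∪ B := by
    intro x hx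
    by_cases hxB : x ∈ B
    · exact Or.inr hxB
    · exact Or.inl (hsub ⟨hx, hxB⟩)
  have h2 : Cardinal.lift.{1} κ ≤ #Z + #B := by
    calc Cardinal.lift.{1} κ = #(Set.Iio κ.ord) := (mk_Iio_ord κ).symm
      _ ≤ #(Z ∪ B : Set Ordinal.{0}) := mk_le_mk_of_subset h1
      _ ≤ #Z + #B := mk_union_le _ _
  exact absurd h2 (not_le.2
    (Cardinal.add_lt_of_lt (Cardinal.aleph0_le_lift.mpr hκ) hlt hB))

/-- A quadruple of sets of ordinals: `((A, B), (A', B'))`. -/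
abbrev Quad := (Set Ordinal.{0} × Set Ordinal.{0}) × (Set Ordinal.{0} × Set Ordinal.{0})

def quadSet (t : Quad) : Set Ordinal.{0} := t.1.1 ∪ t.1.2 ∪ t.2.1 ∪ t.2.2

/-- Transfinite sequence of quadruples: at each stage choose (if possible) a pair of
patterns, one from `Q` and one from `Q'`, whose first components avoid everything
accumulated so far. -/
noncomputable def auxSeq (Q Q' : Set (Set Ordinal.{0} × Set Ordinal.{0})) :
    Ordinal.{0} → Quad :=
  Ordinal.lt_wf.fix fun α rec =>
    Classical.epsilon fun t : Quad => t.1 ∈ Q ∧ t.2 ∈ Q' ∧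
      (t.1.1 ∪ t.2.1) ∩ (⋃ β : Set.Iio α, quadSet (rec β β.2)) = ∅

/-- Everything accumulated before stage `α`. -/
def auxB (Q Q' : Set (Set Ordinal.{0} × Set Ordinal.{0})) (α : Ordinal.{0}) :
    Set Ordinal.{0} :=
  ⋃ β : Set.Iio α, quadSet (auxSeq Q Q' β)

lemma auxSeq_spec (Q Q' : Set (Set Ordinal.{0} × Set Ordinal.{0})) (α : Ordinal.{0})
    (h : ∃ t : Quad, t.1 ∈ Q ∧ t.2 ∈ Q' ∧ (t.1.1 ∪ t.2.1) ∩ auxB Q Q' α = ∅) :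
    (auxSeq Q Q' α).1 ∈ Q ∧ (auxSeq Q Q' α).2 ∈ Q' ∧
      ((auxSeq Q Q' α).1.1 ∪ (auxSeq Q Q' α).2.1) ∩ auxB Q Q' α = ∅ := by
  have e : auxSeq Q Q' α = Classical.epsilon (fun t : Quad => t.1 ∈ Q ∧ t.2 ∈ Q' ∧
      (t.1.1 ∪ t.2.1) ∩ auxB Q Q' α = ∅) :=
    Ordinal.lt_wf.fix_eq _ α
  rw [e]
  exact Classical.epsilon_spec h

/-- The key decision lemma: any `S ∈ Δ([κ]^{<γ},[κ]^{<γ})` is decided by some set `D`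
of size at most `γ`: all big subsets of `Iio κ.ord \ D` lie on the same side of `S`. -/
lemma decide_lemma (γ κ : Cardinal.{0}) (hγ : ℵ₀ ≤ γ) (hγκ : γ < κ)
    (S : Set (Set Ordinal.{0})) (hS : S ∈ DeltaFam κ (smallSets κ γ) (smallSets κ γ)) :
    ∃ D : Set Ordinal.{0}, #D ≤ Cardinal.lift.{1} γ ∧
      ((∀ Y ∈ bigSets κ, Y ⊆ Set.Iio κ.ord \ D → Y ∈ S) ∨
       (∀ Y ∈ bigSets κ, Y ⊆ Set.Iio κ.ord \ D → Y ∉ S)) := by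
  obtain ⟨⟨Q, hQ, hSrep⟩, ⟨Q', hQ', hCrep⟩⟩ := hS
  have hκ : ℵ₀ ≤ κ := hγ.trans hγκ.le
  have hγl : (ℵ₀ : Cardinal.{1}) ≤ Cardinal.lift.{1} γ := Cardinal.aleph0_le_lift.mpr hγ
  by_contra hcon
  push_neg at hcon
  -- Existence of an undecided pair of patterns avoiding any small accumulated set.
  have hex : ∀ Bacc : Set Ordinal.{0}, #Bacc ≤ Cardinal.lift.{1} γ →
      ∃ t : Quad, t.1 ∈ Q ∧ t.2 ∈ Q' ∧ (t.1.1 ∪ t.2.1) ∩ Bacc = ∅ := by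
    intro Bacc hB
    obtain ⟨h1, h2⟩ := hcon Bacc hB
    obtain ⟨Y', hY'big, hY'sub, hY'notS⟩ := h1
    obtain ⟨Y, hYbig, hYsub, hYS⟩ := h2
    have hYS' : Y ∈ {X ∈ bigSets κ | ∃ p ∈ Q, Matches X p.1 p.2} := hSrep ▸ hYS
    obtain ⟨-, p, hpQ, hpA, -⟩ := hYS'
    have hY'C : Y' ∈ {X ∈ bigSets κ | ∃ p ∈ Q', Matches X p.1 p.2} :=
      hCrep ▸ (⟨hY'big, hY'notS⟩ : Y' ∈ bigSets κ \ S)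
    obtain ⟨-, q, hqQ', hqA, -⟩ := hY'C
    refine ⟨(p, q), hpQ, hqQ', ?_⟩
    apply Set.eq_empty_iff_forall_notMem.mpr
    rintro x ⟨hx1, hx2⟩
    rcases hx1 with hx | hx
    · exact (hYsub (hpA hx)).2 hx2
    · exact (hY'sub (hqA hx)).2 hx2
  set f := auxSeq Q Q' with hf
  -- Main invariant, by transfinite induction.
  have key : ∀ α : Ordinal.{0}, α ≤ γ.ord →
      (f α).1 ∈ Q ∧ (f α).2 ∈ Q' ∧
        ((f α).1.1 ∪ (f α).2.1) ∩ auxB Q Q' α = ∅ := by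
    intro α
    induction α using Ordinal.induction with
    | h α IH =>
      intro hα
      have hBsize : #(auxB Q Q' α) ≤ Cardinal.lift.{1} γ := by
        have h1 : ∀ β : Set.Iio α, #(quadSet (f β)) ≤ Cardinal.lift.{1} γ := by
          intro β
          obtain ⟨hq1, hq2, -⟩ := IH β β.2 ((le_of_lt β.2).trans hα)
          obtain ⟨⟨-, s1⟩, ⟨-, s2⟩, -⟩ := hQ _ hq1
          obtain ⟨⟨-, s3⟩, ⟨-, s4⟩, -⟩ := hQ' _ hq2
          exact le_of_lt (small_union_aux hγ
            (small_union_aux hγ (small_union_aux hγ s1 s2) s3) s4)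
        calc #(auxB Q Q' α) ≤ #(Set.Iio α) * ⨆ β : Set.Iio α, #(quadSet (f β)) :=
              Cardinal.mk_iUnion_le _
          _ ≤ Cardinal.lift.{1} γ * Cardinal.lift.{1} γ := by
              refine mul_le_mul' ?_ (ciSup_le' h1)
              rw [Ordinal.mk_Iio_ordinal]
              exact Cardinal.lift_le.mpr (le_of_le_of_eq (Ordinal.card_le_card hα)
                (Cardinal.card_ord γ))
          _ = Cardinal.lift.{1} γ := Cardinal.mul_eq_self hγl
      exact auxSeq_spec Q Q' α (hex _ hBsize)
  -- The A-parts are contained in later accumulated sets.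
  have hsubB : ∀ (β α : Ordinal.{0}), β < α → quadSet (f β) ⊆ auxB Q Q' α := by
    intro β α hβα x hx
    exact Set.mem_iUnion.mpr ⟨⟨β, hβα⟩, hx⟩
  obtain ⟨hQM, hQ'M, hdisjM⟩ := key γ.ord le_rfl
  -- Pigeonhole: find β < γ.ord with (f γ.ord).1.2 ∩ (f β).2.1 = ∅.
  have hpig : ∃ β : Set.Iio γ.ord, (f γ.ord).1.2 ∩ ((f β).2.1) = ∅ := by
    by_contra hno
    push_neg at hno
    have hch : ∀ β : Set.Iio γ.ord, ∃ x, x ∈ (f γ.ord).1.2 ∩ ((f β).2.1) :=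
      fun β => hno β
    choose g hg using hch
    have hAdisj : ∀ β1 β2 : Set.Iio γ.ord, (β1 : Ordinal) < β2 →
        ∀ x, x ∈ (f β1).2.1 → x ∉ (f β2).2.1 := by
      intro β1 β2 h12 x hx1 hx2
      obtain ⟨-, -, hd⟩ := key β2 (le_of_lt β2.2)
      have hxB : x ∈ auxB Q Q' β2 :=
        hsubB β1 β2 h12 (Or.inl (Or.inr hx1))
      exact Set.eq_empty_iff_forall_notMem.mp hd x ⟨Or.inr hx2, hxB⟩
    have hinj : Function.Injective
        (fun β : Set.Iio γ.ord => (⟨g β, (hg β).1⟩ : ((f γ.ord).1.2 : Set Ordinal.{0}))) := by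
      intro β1 β2 hEq
      by_contra hne
      have hEq' : g β1 = g β2 := congrArg Subtype.val hEq
      rcases lt_trichotomy (β1 : Ordinal) (β2 : Ordinal) with h | h | h
      · exact hAdisj β1 β2 h (g β1) (hg β1).2 (hEq' ▸ (hg β2).2)
      · exact hne (Subtype.ext h)
      · exact hAdisj β2 β1 h (g β2) (hg β2).2 (hEq'.symm ▸ (hg β1).2)
    have hle : Cardinal.lift.{1} γ ≤ #((f γ.ord).1.2) := by
      calc Cardinal.lift.{1} γ = #(Set.Iio γ.ord) := by
            rw [Ordinal.mk_Iio_ordinal, Cardinal.card_ord]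
        _ ≤ #((f γ.ord).1.2) := Cardinal.mk_le_of_injective hinj
    obtain ⟨-, sB⟩ := (hQ _ hQM).2.1
    exact absurd hle (not_le.2 sB)
  obtain ⟨β, hβ⟩ := hpig
  obtain ⟨hQβ, hQ'β, hdisjβ⟩ := key β (le_of_lt β.2)
  -- Notation for the two patterns.
  set A := (f γ.ord).1.1 with hA
  set Bs := (f γ.ord).1.2 with hBs
  set A' := (f (β : Ordinal)).2.1 with hA'
  set B' := (f (β : Ordinal)).2.2 with hB'
  obtain ⟨⟨hAIio, hAsm⟩, ⟨hBsIio, hBssm⟩, hABd⟩ := hQ _ hQM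
  obtain ⟨⟨hA'Iio, hA'sm⟩, ⟨hB'Iio, hB'sm⟩, hA'B'd⟩ := hQ' _ hQ'β
  -- The witness set Z.
  set Z := A ∪ A' ∪ (Set.Iio κ.ord \ (Bs ∪ B')) with hZ
  have hZbig : Z ∈ bigSets κ := by
    refine big_of_superset (B := Bs ∪ B') hκ ?_ ?_ ?_
    · intro x hx
      rcases hx with (hx | hx) | hx
      · exact hAIio hx
      · exact hA'Iio hx
      · exact hx.1
    · exact lt_trans (small_union_aux hγ hBssm hB'sm) (Cardinal.lift_lt.mpr hγκ)
    · exact Set.subset_union_right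
  have hB'subB : B' ⊆ auxB Q Q' γ.ord :=
    fun y hy => hsubB β γ.ord β.2 (Or.inr hy)
  have hABsd : Bs ∩ A = ∅ := by
    apply Set.eq_empty_iff_forall_notMem.mpr
    intro x hx
    exact (Set.disjoint_left.mp hABd) hx.2 hx.1
  -- Z is in S.
  have hZS : Z ∈ S := by
    have : Z ∈ {X ∈ bigSets κ | ∃ p ∈ Q, Matches X p.1 p.2} := by
      refine ⟨hZbig, (f γ.ord).1, hQM, fun x hx => Or.inl (Or.inl hx), ?_⟩
      apply Set.eq_empty_iff_forall_notMem.mpr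
      rintro x ⟨hxB, hxZ⟩
      rcases hxZ with (hx | hx) | hx
      · exact Set.eq_empty_iff_forall_notMem.mp hABsd x ⟨hxB, hx⟩
      · exact Set.eq_empty_iff_forall_notMem.mp hβ x ⟨hxB, hx⟩
      · exact hx.2 (Or.inl hxB)
    exact hSrep ▸ this
  -- Z is in the complement of S.
  have hZC : Z ∈ bigSets κ \ S := by
    have : Z ∈ {X ∈ bigSets κ | ∃ p ∈ Q', Matches X p.1 p.2} := by
      refine ⟨hZbig, (f (β : Ordinal)).2, hQ'β, fun x hx => Or.inl (Or.inr hx), ?_⟩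
      apply Set.eq_empty_iff_forall_notMem.mpr
      rintro x ⟨hxB, hxZ⟩
      rcases hxZ with (hx | hx) | hx
      · -- x ∈ B' and x ∈ A : but A ∩ auxB γ.ord = ∅ and B' ⊆ auxB γ.ord
        exact Set.eq_empty_iff_forall_notMem.mp hdisjM x ⟨Or.inl hx, hB'subB hxB⟩
      · exact (Set.disjoint_left.mp hA'B'd) hx hxB
      · exact hx.2 (Or.inr hxB)
    exact hCrep ▸ this
  exact hZC.2 hZS

/-- Let `γ < κ` be infinite cardinals and `λ < κ` a cardinal.
Any family of `λ` many sets in `Δ([κ]^{<γ}, [κ]^{<γ})` admits a single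
`H ∈ [κ]^κ` simultaneously homogeneous for all of them. -/
theorem statement2 (γ κ lam : Cardinal.{0}) (hγ : ℵ₀ ≤ γ) (hγκ : γ < κ)
    (hlam : lam < κ)
    (S : Ordinal.{0} → Set (Set Ordinal.{0}))
    (hS : ∀ i < lam.ord, S i ∈ DeltaFam κ (smallSets κ γ) (smallSets κ γ)) :
    ∃ H ∈ bigSets κ, ∀ i < lam.ord,
      subBig κ H ⊆ S i ∨ subBig κ H ∩ S i = ∅ := by
  have hκ : ℵ₀ ≤ κ := hγ.trans hγκ.le
  have hchoice : ∀ i : Ordinal.{0}, ∃ D : Set Ordinal.{0},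
      #D ≤ Cardinal.lift.{1} γ ∧ (i < lam.ord →
        ((∀ Y ∈ bigSets κ, Y ⊆ Set.Iio κ.ord \ D → Y ∈ S i) ∨
         (∀ Y ∈ bigSets κ, Y ⊆ Set.Iio κ.ord \ D → Y ∉ S i))) := by
    intro i
    by_cases h : i < lam.ord
    · obtain ⟨D, h1, h2⟩ := decide_lemma γ κ hγ hγκ (S i) (hS i h)
      exact ⟨D, h1, fun _ => h2⟩
    · exact ⟨∅, by simp, fun h' => absurd h' h⟩
  choose D hD1 hD2 using hchoice
  set U : Set Ordinal.{0} := ⋃ i : Set.Iio lam.ord, D i with hU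
  have hUsmall : #U < Cardinal.lift.{1} κ := by
    calc #U ≤ #(Set.Iio lam.ord) * ⨆ i : Set.Iio lam.ord, #(D i) :=
          Cardinal.mk_iUnion_le _
      _ ≤ Cardinal.lift.{1} lam * Cardinal.lift.{1} γ := by
          refine mul_le_mul' ?_ (ciSup_le' fun i => hD1 i)
          rw [Ordinal.mk_Iio_ordinal, Cardinal.card_ord]
      _ = Cardinal.lift.{1} (lam * γ) := (Cardinal.lift_mul _ _).symm
      _ < Cardinal.lift.{1} κ :=
          Cardinal.lift_lt.mpr (Cardinal.mul_lt_of_lt hκ hlam hγκ)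
  refine ⟨Set.Iio κ.ord \ U, ?_, ?_⟩
  · exact big_of_superset hκ Set.diff_subset hUsmall subset_rfl
  · intro i hi
    have hHsub : ∀ Y ∈ subBig κ (Set.Iio κ.ord \ U),
        Y ∈ bigSets κ ∧ Y ⊆ Set.Iio κ.ord \ D i := by
      rintro Y ⟨hY1, hY2⟩
      refine ⟨⟨fun x hx => (hY1 hx).1, hY2⟩, fun x hx => ⟨(hY1 hx).1, fun hxD => ?_⟩⟩
      exact (hY1 hx).2 (Set.mem_iUnion.mpr ⟨⟨i, hi⟩, hxD⟩)
    rcases hD2 i hi with h | h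
    · left
      intro Y hY
      obtain ⟨hb, hs⟩ := hHsub Y hY
      exact h Y hb hs
    · right
      apply Set.eq_empty_iff_forall_notMem.mpr
      rintro Y ⟨hY1, hY2⟩
      obtain ⟨hb, hs⟩ := hHsub Y hY1
      exact h Y hb hs hY2
end

section
/- Let κ be an infinite cardinal that is not weakly compact, in the sense that there exists a coloring c : [κ]^2 → 2 such that there is no H ⊆ κ of cardinality κ with c constant on the 2-element subsets of H. Then there is a set 𝒮 ∈ Δ([κ]^2, [κ]^{<κ}) that is not Ramsey. -/
open Set Cardinal

universe u

section Aux

open Ordinal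

lemma fin2_ne_zero_iff (a : Fin 2) : ¬ a = 0 ↔ a = 1 := by revert a; decide

lemma aux_infinite {κ : Cardinal.{0}} (hκ : ℵ₀ ≤ κ) {X : Set Ordinal.{0}}
    (hX : #X = Cardinal.lift.{1} κ) : X.Infinite := by
  rw [← Set.infinite_coe_iff, Cardinal.infinite_iff, hX]
  exact Cardinal.aleph0_le_lift.mpr hκ

lemma mk_pair_two {α β : Ordinal.{0}} (h : α ≠ β) :
    #({α, β} : Set Ordinal.{0}) = ((2 : ℕ) : Cardinal) := by
  rw [Cardinal.mk_insert (by simpa using h), Cardinal.mk_singleton]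
  norm_num

lemma matches_iff {X : Set Ordinal.{0}} (hX : X.Infinite)
    {α β : Ordinal.{0}} (hαβ : α < β) :
    Matches X {α, β} (Set.Iio β \ {α}) ↔ sInf X = α ∧ sInf (X \ {sInf X}) = β := by
  have hne : X.Nonempty := hX.nonempty
  have hne' : (X \ {sInf X}).Nonempty := (hX.diff (Set.finite_singleton _)).nonempty
  constructor
  · rintro ⟨hsub, hdisj⟩
    have hα : α ∈ X := hsub (Set.mem_insert _ _)
    have hβ : β ∈ X := hsub (Set.mem_insert_of_mem _ rfl)
    have hdisj' := Set.eq_empty_iff_forall_notMem.mp hdisj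
    have h0 : sInf X = α := by
      rcases lt_or_eq_of_le (csInf_le (OrderBot.bddBelow X) hα) with h | h
      · exact absurd ⟨⟨h.trans hαβ, by simpa using h.ne⟩, csInf_mem hne⟩ (hdisj' (sInf X))
      · exact h
    refine ⟨h0, ?_⟩
    have hβ' : β ∈ X \ {sInf X} := ⟨hβ, by simp [h0, hαβ.ne']⟩
    rcases lt_or_eq_of_le (csInf_le (OrderBot.bddBelow _) hβ') with h | h
    · obtain ⟨hmem, hne2⟩ := csInf_mem hne'
      exact absurd ⟨⟨h, by simpa [h0] using hne2⟩, hmem⟩ (hdisj' _)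
    · exact h
  · rintro ⟨h0, h1⟩
    have hs0 : sInf X ∈ X := csInf_mem hne
    have hs1 : sInf (X \ {sInf X}) ∈ X \ {sInf X} := csInf_mem hne'
    constructor
    · rintro x (rfl | rfl)
      · exact h0 ▸ hs0
      · exact h1 ▸ hs1.1
    · apply Set.eq_empty_iff_forall_notMem.mpr
      rintro x ⟨⟨hxβ, hxα⟩, hxX⟩
      have hx' : x ∈ X \ {sInf X} := ⟨hxX, by simpa [h0] using hxα⟩
      have := csInf_le (OrderBot.bddBelow _) hx'
      rw [h1] at this
      exact absurd hxβ (not_lt_of_ge this)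

lemma sigma_mem {κ : Cardinal.{0}} (hκ : ℵ₀ ≤ κ) (c : Set Ordinal.{0} → Fin 2) (v : Fin 2) :
    {X ∈ bigSets κ | c {sInf X, sInf (X \ {sInf X})} = v} ∈
      SigmaFam κ (nSets κ 2) (smallSets κ κ) := by
  refine ⟨{p | ∃ α β : Ordinal.{0}, α < β ∧ β < κ.ord ∧
      p = ({α, β}, Set.Iio β \ {α}) ∧ c {α, β} = v}, ?_, ?_⟩
  · rintro p ⟨α, β, hαβ, hβ, rfl, hcv⟩
    refine ⟨⟨?_, mk_pair_two hαβ.ne⟩, ⟨?_, ?_⟩, ?_⟩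
    · rintro x (rfl | rfl)
      · exact hαβ.trans hβ
      · exact hβ
    · exact fun x hx => hx.1.trans hβ
    · calc #(Set.Iio β \ {α} : Set Ordinal.{0}) ≤ #(Set.Iio β : Set Ordinal.{0}) :=
            Cardinal.mk_le_mk_of_subset Set.diff_subset
        _ < Cardinal.lift.{1} κ := by
            rw [Ordinal.mk_Iio_ordinal]
            exact Cardinal.lift_lt.mpr (Cardinal.lt_ord.mp hβ)
    · rw [Set.disjoint_left]
      rintro x (rfl | rfl) hx
      · exact hx.2 rfl
      · simp at hx
  · ext X
    simp only [Set.mem_setOf_eq]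
    constructor
    · rintro ⟨hXb, hcv⟩
      have hinf : X.Infinite := aux_infinite hκ hXb.2
      have hne : X.Nonempty := hinf.nonempty
      have hne' : (X \ {sInf X}).Nonempty := (hinf.diff (Set.finite_singleton _)).nonempty
      set α := sInf X with hα
      set β := sInf (X \ {sInf X}) with hβ
      have hβmem : β ∈ X \ {sInf X} := csInf_mem hne'
      have hαβ : α < β :=
        lt_of_le_of_ne (csInf_le (OrderBot.bddBelow _) hβmem.1) (Ne.symm (by simpa using hβmem.2))
      have hβκ : β < κ.ord := hXb.1 hβmem.1
      exact ⟨hXb, ({α, β}, Set.Iio β \ {α}), ⟨α, β, hαβ, hβκ, rfl, hcv⟩,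
        (matches_iff hinf hαβ).mpr ⟨rfl, rfl⟩⟩
    · rintro ⟨hXb, p, ⟨α, β, hαβ, hβ, rfl, hcv⟩, hm⟩
      have hinf : X.Infinite := aux_infinite hκ hXb.2
      obtain ⟨h0, h1⟩ := (matches_iff hinf hαβ).mp hm
      exact ⟨hXb, by rw [h1, h0]; exact hcv⟩

lemma tail_exists {κ : Cardinal.{0}} (hκ : ℵ₀ ≤ κ) {H : Set Ordinal.{0}} (hH : H ∈ bigSets κ)
    {α β : Ordinal.{0}} (hα : α ∈ H) (hβ : β ∈ H) (hαβ : α < β) :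
    ∃ X ∈ subBig κ H, sInf X = α ∧ sInf (X \ {sInf X}) = β := by
  set T : Set Ordinal.{0} := H \ Set.Iio (β + 1) with hT
  set X : Set Ordinal.{0} := insert α (insert β T) with hXdef
  have hXH : X ⊆ H := by
    rintro x (rfl | rfl | hx)
    · exact hα
    · exact hβ
    · exact hx.1
  have hsucc : β + 1 < κ.ord := by
    rw [Ordinal.add_one_eq_succ]
    exact (Cardinal.isSuccLimit_ord hκ).succ_lt (hH.1 hβ)
  have hsmall : #(H ∩ Set.Iio (β + 1) : Set Ordinal.{0}) < Cardinal.lift.{1} κ := by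
    calc #(H ∩ Set.Iio (β + 1) : Set Ordinal.{0}) ≤ #(Set.Iio (β + 1) : Set Ordinal.{0}) :=
          Cardinal.mk_le_mk_of_subset Set.inter_subset_right
      _ < Cardinal.lift.{1} κ := by
          rw [Ordinal.mk_Iio_ordinal]
          exact Cardinal.lift_lt.mpr (Cardinal.lt_ord.mp hsucc)
  have hTbig : Cardinal.lift.{1} κ ≤ #T := by
    by_contra h
    push_neg at h
    have hcover : H ⊆ T ∪ (H ∩ Set.Iio (β + 1)) := by
      intro x hx
      by_cases hx' : x ∈ Set.Iio (β + 1)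
      · exact Or.inr ⟨hx, hx'⟩
      · exact Or.inl ⟨hx, hx'⟩
    have := calc Cardinal.lift.{1} κ = #H := hH.2.symm
      _ ≤ #(T ∪ (H ∩ Set.Iio (β + 1)) : Set Ordinal.{0}) := Cardinal.mk_le_mk_of_subset hcover
      _ ≤ #T + #(H ∩ Set.Iio (β + 1) : Set Ordinal.{0}) := Cardinal.mk_union_le _ _
      _ < Cardinal.lift.{1} κ :=
          Cardinal.add_lt_of_lt (Cardinal.aleph0_le_lift.mpr hκ) h hsmall
    exact absurd this (lt_irrefl _)
  have hXcard : #X = Cardinal.lift.{1} κ := by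
    apply le_antisymm
    · rw [← hH.2]; exact Cardinal.mk_le_mk_of_subset hXH
    · refine hTbig.trans (Cardinal.mk_le_mk_of_subset ?_)
      intro x hx
      exact Set.mem_insert_of_mem _ (Set.mem_insert_of_mem _ hx)
  have h0 : sInf X = α := by
    apply le_antisymm (csInf_le (OrderBot.bddBelow _) (Set.mem_insert _ _))
    apply le_csInf ⟨α, Set.mem_insert _ _⟩
    rintro x (rfl | rfl | hx)
    · exact le_rfl
    · exact hαβ.le
    · have : β + 1 ≤ x := not_lt.mp hx.2
      exact (hαβ.trans (lt_of_lt_of_le (Order.lt_succ β) (by rwa [← Ordinal.add_one_eq_succ]))).le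
  refine ⟨X, ⟨hXH, hXcard⟩, h0, ?_⟩
  rw [h0]
  have hβmem : β ∈ X \ {α} :=
    ⟨Set.mem_insert_of_mem _ (Set.mem_insert _ _), by simpa using hαβ.ne'⟩
  apply le_antisymm (csInf_le (OrderBot.bddBelow _) hβmem)
  apply le_csInf ⟨β, hβmem⟩
  rintro x ⟨(rfl | rfl | hx), hxα⟩
  · exact (hxα rfl).elim
  · exact le_rfl
  · have : β + 1 ≤ x := not_lt.mp hx.2
    exact le_trans (le_of_lt (lt_of_lt_of_le (Order.lt_succ β)
      (by rwa [← Ordinal.add_one_eq_succ]))) le_rfl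

end Aux
/-- If the infinite cardinal `κ` is not weakly compact, in the
sense that some coloring `c : [κ]^2 → 2` admits no homogeneous set of
cardinality `κ`, then some `𝒮 ∈ Δ([κ]^2, [κ]^{<κ})` is not Ramsey. -/
theorem statement4 (κ : Cardinal.{0}) (hκ : ℵ₀ ≤ κ)
    (hwc : ∃ c : Set Ordinal.{0} → Fin 2,
      ¬ ∃ H, H ⊆ Set.Iio κ.ord ∧ #H = Cardinal.lift.{1} κ ∧
        ∀ A₁ ∈ nSets κ 2, ∀ A₂ ∈ nSets κ 2, A₁ ⊆ H → A₂ ⊆ H → c A₁ = c A₂) :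
    ∃ S ∈ DeltaFam κ (nSets κ 2) (smallSets κ κ), ¬ IsRamsey κ S := by
  obtain ⟨c, hc⟩ := hwc
  refine ⟨{X ∈ bigSets κ | c {sInf X, sInf (X \ {sInf X})} = 0}, ⟨sigma_mem hκ c 0, ?_⟩, ?_⟩
  · have h1 := sigma_mem hκ c 1
    have : bigSets κ \ {X ∈ bigSets κ | c {sInf X, sInf (X \ {sInf X})} = 0}
        = {X ∈ bigSets κ | c {sInf X, sInf (X \ {sInf X})} = 1} := by
      ext X
      simp only [Set.mem_diff, Set.mem_setOf_eq]
      constructor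
      · rintro ⟨hX, hns⟩
        refine ⟨hX, (fin2_ne_zero_iff _).mp fun h => hns ⟨hX, h⟩⟩
      · rintro ⟨hX, h1'⟩
        refine ⟨hX, fun h => ?_⟩
        rw [h1'] at h
        exact absurd h.2 (by decide)
    rw [this]
    exact h1
  · rintro ⟨H, hH, hcase⟩
    apply hc
    refine ⟨H, hH.1, hH.2, ?_⟩
    -- key: every 2-element subset of H arises as the least pair of some X ∈ [H]^κ
    have key : ∀ A ∈ nSets κ 2, A ⊆ H →
        ∃ X, X ∈ subBig κ H ∧ X ∈ bigSets κ ∧ c {sInf X, sInf (X \ {sInf X})} = c A := by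
      intro A hA hAH
      have hA2 : #A = (2 : Cardinal) := by
        rw [hA.2]; norm_num
      obtain ⟨x, y, hxy, hU⟩ := Cardinal.mk_eq_two_iff.mp hA2
      have hxy' : (x : Ordinal.{0}) ≠ (y : Ordinal.{0}) := fun h => hxy (Subtype.ext h)
      have hAeq : A = {(x : Ordinal.{0}), (y : Ordinal.{0})} := by
        apply Set.Subset.antisymm
        · intro a ha
          have hmem : (⟨a, ha⟩ : A) ∈ ({x, y} : Set A) := hU ▸ Set.mem_univ _
          rcases hmem with h | h
          · exact Or.inl (congrArg Subtype.val h)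
          · exact Or.inr (congrArg Subtype.val h)
        · rintro a (rfl | rfl)
          exacts [x.2, y.2]
      have main : ∀ α β : Ordinal.{0}, α < β → A = {α, β} →
          ∃ X, X ∈ subBig κ H ∧ X ∈ bigSets κ ∧ c {sInf X, sInf (X \ {sInf X})} = c A := by
        intro α β hαβ hAab
        have hαH : α ∈ H := hAH (hAab ▸ Set.mem_insert _ _)
        have hβH : β ∈ H := hAH (hAab ▸ Set.mem_insert_of_mem _ rfl)
        obtain ⟨X, hXsub, h0, h1⟩ := tail_exists hκ hH hαH hβH hαβ
        refine ⟨X, hXsub, ⟨fun z hz => hH.1 (hXsub.1 hz), hXsub.2⟩, ?_⟩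
        rw [h1, h0, ← hAab]
      rcases lt_or_gt_of_ne hxy' with h | h
      · exact main _ _ h hAeq
      · exact main _ _ h (hAeq.trans (Set.pair_comm _ _))
    have const : ∃ v : Fin 2, ∀ A ∈ nSets κ 2, A ⊆ H → c A = v := by
      rcases hcase with hpos | hneg
      · refine ⟨0, fun A hA hAH => ?_⟩
        obtain ⟨X, hXsub, _, hcX⟩ := key A hA hAH
        rw [← hcX]
        exact (hpos hXsub).2
      · refine ⟨1, fun A hA hAH => ?_⟩
        obtain ⟨X, hXsub, hXbig, hcX⟩ := key A hA hAH
        rw [← hcX]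
        apply (fin2_ne_zero_iff _).mp
        intro h0
        have : X ∈ subBig κ H ∩ {X ∈ bigSets κ | c {sInf X, sInf (X \ {sInf X})} = 0} :=
          ⟨hXsub, hXbig, h0⟩
        rw [hneg] at this
        exact this
    obtain ⟨v, hv⟩ := const
    intro A₁ hA₁ A₂ hA₂ h₁ h₂
    rw [hv A₁ hA₁ h₁, hv A₂ hA₂ h₂]
end

section
/- Let κ be an infinite cardinal, let X ∈ [κ]^κ, let n ∈ ω, and let 𝒬 be a set of patterns such that each n-element subset A of X has an associated set B_A with (A, B_A) ∈ 𝒬. Suppose X is fast for A ↦ B_A. Then every X' ∈ [X]^κ matches some pattern in 𝒬. -/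
open Set Cardinal

universe u

/-- `X` is *fast* for the assignment `A ↦ B A` (on `n`-element subsets of `X`):
for each `A ∈ [X]^n`, every element of `B A ∩ X` is `< sup A`. -/
def Fast (n : ℕ) (X : Set Ordinal.{0}) (B : Set Ordinal.{0} → Set Ordinal.{0}) : Prop :=
  ∀ A, A ⊆ X → #A = n → ∀ b ∈ B A ∩ X, b < sSup A


lemma initial_seg (X' : Set Ordinal.{0}) (hinf : X'.Infinite) (n : ℕ) :
    ∃ A, A ⊆ X' ∧ A.Finite ∧ A.ncard = n ∧ ∀ x ∈ X', x < sSup A → x ∈ A := by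
  induction n with
  | zero =>
    refine ⟨∅, by simp, Set.finite_empty, by simp, ?_⟩
    intro x _ hx
    simp only [csSup_empty] at hx
    exact absurd hx (by simp)
  | succ n ih =>
    obtain ⟨A, hAX, hfin, hcard, hinit⟩ := ih
    have hne : (X' \ A).Nonempty := (hinf.diff hfin).nonempty
    obtain ⟨m, hm, hmin⟩ := wellFounded_lt.has_min (X' \ A) hne
    have hmX : m ∈ X' := hm.1
    have hmA : m ∉ A := hm.2
    have hub : ∀ y ∈ A, y ≤ m := by
      intro y hy
      have hsA : sSup A ≤ m := by
        by_contra h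
        exact hmA (hinit m hmX (lt_of_not_ge h))
      exact le_trans (le_csSup hfin.bddAbove hy) hsA
    have hsup : sSup (insert m A) = m := by
      apply le_antisymm
      · exact csSup_le (Set.insert_nonempty _ _)
          (by rintro y (rfl | hy); exacts [le_refl _, hub y hy])
      · exact le_csSup (hfin.insert m).bddAbove (Set.mem_insert _ _)
    refine ⟨insert m A, Set.insert_subset hmX hAX, hfin.insert m,
      by rw [Set.ncard_insert_of_notMem hmA hfin, hcard], ?_⟩
    intro x hxX hx
    rw [hsup] at hx
    by_cases hxA : x ∈ A
    · exact Set.mem_insert_of_mem _ hxA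
    · exact absurd hx (hmin x ⟨hxX, hxA⟩)

/-- Suppose `X ∈ [κ]^κ`, `𝒬` is a set of patterns, each
`A ∈ [X]^n` has an associated `B A` with `(A, B A) ∈ 𝒬`, and `X` is fast for
`A ↦ B A`.  Then every `X' ∈ [X]^κ` matches some pattern in `𝒬`. -/
theorem statement5 (κ : Cardinal.{0}) (hκ : ℵ₀ ≤ κ)
    (X : Set Ordinal.{0}) (hX : X ∈ bigSets κ) (n : ℕ)
    (Q : Set (Set Ordinal.{0} × Set Ordinal.{0}))
    (hQ : ∀ p ∈ Q, p.1 ⊆ Set.Iio κ.ord ∧ p.2 ⊆ Set.Iio κ.ord ∧ Disjoint p.1 p.2)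
    (B : Set Ordinal.{0} → Set Ordinal.{0})
    (hB : ∀ A, A ⊆ X → #A = n → (A, B A) ∈ Q)
    (hfast : Fast n X B) :
    ∀ X' ∈ subBig κ X, ∃ p ∈ Q, Matches X' p.1 p.2 := by
  intro X' hX'
  obtain ⟨hsub, hcardX'⟩ := hX'
  have hinf : X'.Infinite := by
    rw [← Set.infinite_coe_iff, Cardinal.infinite_iff, hcardX']
    exact le_trans (by simpa using hκ) le_rfl
  obtain ⟨A, hAX', hfin, hcard, hinit⟩ := initial_seg X' hinf n
  have hmk : #A = n := by
    rw [← Cardinal.cast_toNat_of_lt_aleph0 hfin.lt_aleph0]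
    have h1 : (#↑A).toNat = A.ncard := Nat.card_coe_set_eq A
    rw [h1, hcard]
  have hAX : A ⊆ X := hAX'.trans hsub
  have hQmem := hB A hAX hmk
  refine ⟨(A, B A), hQmem, hAX', ?_⟩
  ext b
  simp only [Set.mem_inter_iff, Set.mem_empty_iff_false, iff_false, not_and]
  intro hbB hbX'
  have hblt : b < sSup A := hfast A hAX hmk b ⟨hbB, hsub hbX'⟩
  have hbA : b ∈ A := hinit b hbX' hblt
  exact (hQ _ hQmem).2.2.le_bot ⟨hbA, hbB⟩
end

section
/- Let κ be an infinite regular cardinal, let X ∈ [κ]^κ, let n ∈ ω, and let 𝒬 be a set of ([κ]^n, [κ]^{<κ})-patterns such that each n-element subset A of X has an associated set B_A with (A, B_A) ∈ 𝒬. Then there is some X' ∈ [X]^κ that is fast for A ↦ B_A. -/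
open Set Cardinal

universe u

section AuxStatement6

/-- The supremum of a set of ordinals below `κ.ord` of cardinality `< κ` is `< κ.ord`,
for `κ` regular. -/
lemma aux6_sSup_lt {κ : Cardinal.{0}} (hκ : κ.IsRegular) {s : Set Ordinal.{0}}
    (hs : s ⊆ Set.Iio κ.ord) (hc : #s < Cardinal.lift.{1} κ) : sSup s < κ.ord := by
  haveI : Small.{0} s := small_subset hs
  have hrange : Set.range (fun i : Shrink.{0} s => ((equivShrink s).symm i : Ordinal)) = s := by
    ext a
    constructor
    · rintro ⟨i, rfl⟩; exact ((equivShrink s).symm i).2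
    · intro ha; exact ⟨equivShrink s ⟨a, ha⟩, by simp⟩
  have heq : sSup s = ⨆ i : Shrink.{0} s, ((equivShrink s).symm i : Ordinal) := by
    rw [iSup, hrange]
  rw [heq]
  apply Cardinal.iSup_lt_ord_of_isRegular hκ
  · have h1 : Cardinal.lift.{1} #(Shrink.{0} s) = #s := Cardinal.lift_mk_shrink'' _
    rw [← Cardinal.lift_lt.{0, 1}, h1]
    exact hc
  · intro i; exact hs ((equivShrink s).symm i).2

/-- A subset of `Iio κ.ord` of full cardinality `κ` is unbounded, for `κ` regular. -/
lemma aux6_unbounded {κ : Cardinal.{0}} (hκ : κ.IsRegular) {X : Set Ordinal.{0}}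
    (_hs : X ⊆ Set.Iio κ.ord) (hc : #X = Cardinal.lift.{1} κ) :
    ∀ o < κ.ord, ∃ y ∈ X, o < y := by
  intro o ho
  by_contra h
  push_neg at h
  have hsub : X ⊆ Set.Iio (o + 1) := by
    intro a ha
    have := h a ha
    rw [Set.mem_Iio, Ordinal.add_one_eq_succ, Order.lt_succ_iff]
    exact this
  have h1 : #X ≤ #(Set.Iio (o + 1)) := Cardinal.mk_le_mk_of_subset hsub
  rw [hc, Ordinal.mk_Iio_ordinal] at h1
  have h2 : (o + 1).card < κ := by
    rw [← Cardinal.lt_ord, Ordinal.add_one_eq_succ]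
    exact (Cardinal.isSuccLimit_ord hκ.aleph0_le).succ_lt ho
  exact absurd h1 (not_le.2 (Cardinal.lift_lt.2 h2))

/-- A set of ordinals of cardinality `n` is equivalent to `Fin n`. -/
lemma aux6_equiv_fin {A : Set Ordinal.{0}} {n : ℕ} (h : #A = n) : Nonempty (A ≃ Fin n) := by
  rw [← Cardinal.lift_mk_eq']
  simp [h]

end AuxStatement6

/-- Let `κ` be an infinite regular cardinal, `X ∈ [κ]^κ`, and
`𝒬` a set of `([κ]^n, [κ]^{<κ})`-patterns such that each `A ∈ [X]^n` has an
associated `B A` with `(A, B A) ∈ 𝒬`.  Then some `X' ∈ [X]^κ` is fast for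
`A ↦ B A`. -/
theorem statement6 (κ : Cardinal.{0}) (hκ : κ.IsRegular)
    (X : Set Ordinal.{0}) (hX : X ∈ bigSets κ) (n : ℕ)
    (Q : Set (Set Ordinal.{0} × Set Ordinal.{0}))
    (hQ : ∀ p ∈ Q, p.1 ∈ nSets κ n ∧ p.2 ∈ smallSets κ κ ∧ Disjoint p.1 p.2)
    (B : Set Ordinal.{0} → Set Ordinal.{0})
    (hB : ∀ A, A ⊆ X → #A = n → (A, B A) ∈ Q) :
    ∃ X' ∈ subBig κ X, Fast n X' B := by

  classical
  obtain ⟨hXsub, hXcard⟩ := hX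
  have hord0 : (0 : Ordinal) < κ.ord := (Cardinal.isSuccLimit_ord hκ.aleph0_le).pos
  -- basic facts about B A for good A
  have hBA : ∀ A : Set Ordinal.{0}, A ⊆ X → #A = n →
      B A ⊆ Set.Iio κ.ord ∧ #(B A) < Cardinal.lift.{1} κ ∧ Disjoint A (B A) := by
    intro A h1 h2
    obtain ⟨-, h3, h4⟩ := hQ _ (hB A h1 h2)
    exact ⟨h3.1, h3.2, h4⟩
  -- the set coded by a tuple
  set toA : ∀ ξ : Ordinal.{0}, (Fin n → (ξ + 1).ToType) → Set Ordinal.{0} :=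
    fun ξ v => Set.range (fun i => ((((Ordinal.ToType.mk (o := ξ + 1))).symm (v i) : Set.Iio (ξ + 1)) : Ordinal))
    with htoA
  -- the bounding function
  set g : Ordinal.{0} → Ordinal.{0} :=
    fun ξ => ⨆ v : Fin n → (ξ + 1).ToType,
      if toA ξ v ⊆ X ∧ #(toA ξ v) = n then sSup (B (toA ξ v)) else 0 with hgdef
  have hg1 : ∀ ξ, ξ < κ.ord → g ξ < κ.ord := by
    intro ξ hξ
    apply Cardinal.iSup_lt_ord_of_isRegular hκ
    · have hlt : (ξ + 1).card < κ := by
        rw [← Cardinal.lt_ord, Ordinal.add_one_eq_succ]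
        exact (Cardinal.isSuccLimit_ord hκ.aleph0_le).succ_lt hξ
      have harr : #(Fin n → (ξ + 1).ToType) = (ξ + 1).card ^ (n : Cardinal.{0}) := by
        rw [Cardinal.mk_arrow]
        simp [Cardinal.mk_toType]
      rw [harr]
      rcases lt_or_ge ((ξ + 1).card) ℵ₀ with hfin | hinf
      · exact lt_of_lt_of_le (Cardinal.power_lt_aleph0 hfin (Cardinal.nat_lt_aleph0 n))
          hκ.aleph0_le
      · calc (ξ + 1).card ^ (n : Cardinal.{0}) = (ξ + 1).card ^ n := Cardinal.power_natCast _ n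
          _ ≤ (ξ + 1).card := Cardinal.power_nat_le hinf
          _ < κ := hlt
    · intro v
      by_cases h : toA ξ v ⊆ X ∧ #(toA ξ v) = n
      · rw [if_pos h]
        exact aux6_sSup_lt hκ (hBA _ h.1 h.2).1 (hBA _ h.1 h.2).2.1
      · rw [if_neg h]; exact hord0
  have hg2 : ∀ (ξ : Ordinal.{0}) (A : Set Ordinal.{0}), A ⊆ X → #A = n →
      A ⊆ Set.Iio (ξ + 1) → sSup (B A) ≤ g ξ := by
    intro ξ A hAX hAn hAb
    obtain ⟨e⟩ := aux6_equiv_fin hAn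
    set v : Fin n → (ξ + 1).ToType :=
      fun i => (Ordinal.ToType.mk (o := ξ + 1)) ⟨(e.symm i : Ordinal), hAb (e.symm i).2⟩ with hv
    have hveq : toA ξ v = A := by
      ext a
      simp only [htoA, Set.mem_range]
      constructor
      · rintro ⟨i, rfl⟩
        simp only [hv, OrderIso.symm_apply_apply]
        exact (e.symm i).2
      · intro ha
        refine ⟨e ⟨a, ha⟩, ?_⟩
        simp [hv]
    have hcalc : (if toA ξ v ⊆ X ∧ #(toA ξ v) = n then sSup (B (toA ξ v)) else 0) = sSup (B A) := by
      rw [hveq, if_pos ⟨hAX, hAn⟩]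
    calc sSup (B A) = _ := hcalc.symm
      _ ≤ g ξ := le_ciSup (Ordinal.bddAbove_range _) v
  have hub := aux6_unbounded hκ hXsub hXcard
  -- the recursion step
  have hstep : ∀ α : Ordinal.{0}, α < κ.ord → ∀ ih : ∀ β, β < α → Ordinal.{0},
      ∃ y, y ∈ X ∧ g 0 < y ∧ ∀ β (hβ : β < α), ih β hβ ∈ X →
        ih β hβ < y ∧ g (ih β hβ) < y := by
    intro α hα ih
    set ihv : α.ToType → Ordinal.{0} :=
      fun t => ih (((Ordinal.ToType.mk (o := α))).symm t : Set.Iio α)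
        (((Ordinal.ToType.mk (o := α))).symm t).2 with hihv
    set F1 : α.ToType → Ordinal.{0} := fun t => if ihv t ∈ X then ihv t else 0 with hF1
    set F2 : α.ToType → Ordinal.{0} := fun t => if ihv t ∈ X then g (ihv t) else 0 with hF2
    have hcard : #α.ToType < κ := by
      rw [Cardinal.mk_toType, ← Cardinal.lt_ord]
      exact hα
    have hs1 : (⨆ t, F1 t) < κ.ord := by
      apply Cardinal.iSup_lt_ord_of_isRegular hκ hcard
      intro t
      by_cases h : ihv t ∈ X
      · rw [hF1]; simp only [if_pos h]; exact hXsub h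
      · rw [hF1]; simp only [if_neg h]; exact hord0
    have hs2 : (⨆ t, F2 t) < κ.ord := by
      apply Cardinal.iSup_lt_ord_of_isRegular hκ hcard
      intro t
      by_cases h : ihv t ∈ X
      · rw [hF2]; simp only [if_pos h]; exact hg1 _ (hXsub h)
      · rw [hF2]; simp only [if_neg h]; exact hord0
    have hbig : max (max (⨆ t, F1 t) (⨆ t, F2 t)) (g 0) < κ.ord :=
      max_lt (max_lt hs1 hs2) (hg1 0 hord0)
    obtain ⟨y, hyX, hy⟩ := hub _ hbig
    refine ⟨y, hyX, lt_of_le_of_lt (le_max_right _ _) hy, ?_⟩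
    intro β hβ hmem
    set t : α.ToType := (Ordinal.ToType.mk (o := α)) ⟨β, hβ⟩ with ht
    have hback : (((Ordinal.ToType.mk (o := α))).symm t : Set.Iio α) = ⟨β, hβ⟩ := by
      rw [ht, OrderIso.symm_apply_apply]
    have hihvt : ihv t = ih β hβ := by
      rw [hihv]
      simp only [hback]
    constructor
    · have h1 : F1 t = ih β hβ := by rw [hF1]; simp only [hihvt, if_pos hmem]
      have h2 : ih β hβ ≤ ⨆ t, F1 t := h1 ▸ le_ciSup (Ordinal.bddAbove_range _) t
      exact lt_of_le_of_lt (h2.trans ((le_max_left _ _).trans (le_max_left _ _))) hy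
    · have h1 : F2 t = g (ih β hβ) := by rw [hF2]; simp only [hihvt, if_pos hmem]
      have h2 : g (ih β hβ) ≤ ⨆ t, F2 t := h1 ▸ le_ciSup (Ordinal.bddAbove_range _) t
      exact lt_of_le_of_lt (h2.trans ((le_max_right _ _).trans (le_max_left _ _))) hy
  choose pick hpick1 hpick2 hpick3 using hstep
  -- the recursively defined fast sequence
  set x : Ordinal.{0} → Ordinal.{0} := Ordinal.lt_wf.fix
    (fun α ih => if hα : α < κ.ord then pick α hα ih else 0) with hxdef
  have hxeq : ∀ α, x α = if hα : α < κ.ord then pick α hα (fun β _ => x β) else 0 := by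
    intro α
    rw [hxdef]
    exact Ordinal.lt_wf.fix_eq _ α
  have hxX : ∀ α, α < κ.ord → x α ∈ X := by
    intro α hα
    rw [hxeq α, dif_pos hα]
    exact hpick1 α hα _
  have hxg0 : ∀ α, α < κ.ord → g 0 < x α := by
    intro α hα
    rw [hxeq α, dif_pos hα]
    exact hpick2 α hα _
  have hxlt : ∀ α, α < κ.ord → ∀ β, β < α → x β < x α ∧ g (x β) < x α := by
    intro α hα β hβ
    have h1 := hpick3 α hα (fun β _ => x β) β hβ (hxX β (hβ.trans hα))
    rw [hxeq α, dif_pos hα]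
    exact h1
  have hsub' : x '' Set.Iio κ.ord ⊆ X := by
    rintro _ ⟨α, hα, rfl⟩
    exact hxX α hα
  refine ⟨x '' Set.Iio κ.ord, ⟨hsub', ?_⟩, ?_⟩
  · -- cardinality
    have hinj : Set.InjOn x (Set.Iio κ.ord) := by
      intro a ha b hb hab
      rcases lt_trichotomy a b with h | h | h
      · exact absurd hab (ne_of_lt (hxlt b hb a h).1)
      · exact h
      · exact absurd hab.symm (ne_of_lt (hxlt a ha b h).1)
    rw [Cardinal.mk_image_eq_of_injOn x _ hinj, Ordinal.mk_Iio_ordinal, Cardinal.card_ord]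
  · -- fastness
    intro A hAX' hAn b hb
    obtain ⟨hbB, hbX'⟩ := hb
    obtain ⟨δ, hδ, rfl⟩ := hbX'
    have hAX : A ⊆ X := hAX'.trans hsub'
    have hdisj : Disjoint A (B A) := (hBA A hAX hAn).2.2
    have hbdd : BddAbove (B A) := ⟨κ.ord, fun c hc => le_of_lt ((hBA A hAX hAn).1 hc)⟩
    have hble : x δ ≤ sSup (B A) := le_csSup hbdd hbB
    rcases Nat.eq_zero_or_pos n with hn | hn
    · exfalso
      have hA0 : A = ∅ := by
        have h0 : #A = 0 := by rw [hAn, hn]; simp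
        exact Set.isEmpty_coe_sort.mp (Cardinal.mk_eq_zero_iff.mp h0)
      have h1 : sSup (B A) ≤ g 0 := hg2 0 A hAX hAn (by rw [hA0]; exact Set.empty_subset _)
      exact absurd (hble.trans h1) (not_le.2 (hxg0 δ hδ))
    · have hAfin : A.Finite := by
        rw [← Cardinal.lt_aleph0_iff_set_finite, hAn]
        exact Cardinal.nat_lt_aleph0 n
      have hAne : A.Nonempty := by
        rw [Set.nonempty_iff_ne_empty]
        intro h0
        have hz : (n : Cardinal.{1}) = 0 := by rw [← hAn, h0]; simp
        exact absurd (Nat.cast_eq_zero.mp hz) (by omega)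
      have hm : sSup A ∈ A := hAne.csSup_mem hAfin
      obtain ⟨γ, hγ, hγeq⟩ := hAX' hm
      rcases lt_trichotomy (x δ) (sSup A) with h | h | h
      · exact h
      · exact absurd hbB (Set.disjoint_left.mp hdisj (h ▸ hm))
      · exfalso
        have hγδ : γ < δ := by
          rcases lt_trichotomy γ δ with h' | h' | h'
          · exact h'
          · exfalso
            rw [← h', hγeq] at h
            exact lt_irrefl _ h
          · have := (hxlt γ hγ δ h').1
            rw [hγeq] at this
            exact absurd h (not_lt.2 this.le)
        have h1 : sSup (B A) ≤ g (sSup A) := by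
          apply hg2 _ A hAX hAn
          intro a ha
          have : a ≤ sSup A := le_csSup hAfin.bddAbove ha
          rw [Set.mem_Iio, Ordinal.add_one_eq_succ, Order.lt_succ_iff]
          exact this
        have h2 := (hxlt δ hδ γ hγδ).2
        rw [hγeq] at h2
        exact absurd (hble.trans h1) (not_le.2 h2)
end

section
/- Let κ be an uncountable cardinal satisfying the partition property κ → (κ)²₂, i.e., for every coloring c : [κ]^2 → 2 there is H ⊆ κ of cardinality κ with c constant on [H]^2 (this holds in particular when κ is weakly compact). Then every set in Σ([κ]^2, [κ]^{<κ}) is Ramsey. -/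
open Set Cardinal

universe u

section Aux

lemma pair_mem_nSets {κ : Cardinal.{0}} {a b : Ordinal.{0}} (ha : a < κ.ord) (hb : b < κ.ord)
    (h : a ≠ b) : ({a, b} : Set Ordinal.{0}) ∈ nSets κ 2 := by
  constructor
  · intro x hx
    rcases hx with rfl | hx
    · exact ha
    · rw [Set.mem_singleton_iff] at hx; subst hx; exact hb
  · have hne : a ∉ ({b} : Set Ordinal.{0}) := by simpa using h
    rw [show ({a, b} : Set Ordinal.{0}) = insert a {b} from rfl,
      Cardinal.mk_insert hne, Cardinal.mk_singleton]
    norm_num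

lemma exists_pair_of_mk {H : Set Ordinal.{0}} (h : 1 < #H) :
    ∃ a ∈ H, ∃ b ∈ H, a ≠ b := by
  rw [Cardinal.one_lt_iff_nontrivial] at h
  obtain ⟨⟨a, ha⟩, ⟨b, hb⟩, hne⟩ := h
  exact ⟨a, ha, b, hb, fun e => hne (Subtype.ext e)⟩

lemma isRegular_of_hpart (κ : Cardinal.{0}) (hκ : ℵ₀ < κ)
    (hpart : ∀ c : Set Ordinal.{0} → Fin 2,
      ∃ H, H ⊆ Set.Iio κ.ord ∧ #H = Cardinal.lift.{1} κ ∧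
        ∀ A₁ ∈ nSets κ 2, ∀ A₂ ∈ nSets κ 2, A₁ ⊆ H → A₂ ⊆ H → c A₁ = c A₂) :
    κ.IsRegular := by
  classical
  refine ⟨hκ.le, ?_⟩
  by_contra hcof
  have hcof : κ.ord.cof < κ := lt_of_not_ge hcof
  obtain ⟨ι, f, hlsub, hcard⟩ := Ordinal.exists_lsub_cof κ.ord
  have hblk : ∀ α : Ordinal.{0}, α < κ.ord → ∃ i, α ≤ f i := by
    intro α hα; rw [← hlsub] at hα; exact Ordinal.lt_lsub_iff.1 hα
  have hne : Nonempty ι := by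
    by_contra h
    rw [not_nonempty_iff] at h
    have h0 := (Ordinal.lsub_eq_zero_iff f).2 h
    rw [hlsub] at h0
    have := congrArg Ordinal.card h0
    rw [Cardinal.card_ord, Ordinal.card_zero] at this
    exact (Cardinal.aleph0_pos.trans hκ).ne' this
  set blk : Ordinal.{0} → ι := fun α => if h : ∃ i, α ≤ f i then h.choose else hne.some with hblkdef
  have hblk_le : ∀ α : Ordinal.{0}, α < κ.ord → α ≤ f (blk α) := by
    intro α hα
    have h : ∃ i, α ≤ f i := hblk α hα
    simp only [hblkdef, dif_pos h]
    exact h.choose_spec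
  obtain ⟨H, hH1, hH2, homog⟩ := hpart
    (fun A => if ∀ x ∈ A, ∀ y ∈ A, blk x = blk y then 0 else 1)
  have h1H : 1 < #H := by
    rw [hH2]
    calc (1 : Cardinal.{1}) < ℵ₀ := Cardinal.one_lt_aleph0
      _ = Cardinal.lift.{1} ℵ₀ := Cardinal.lift_aleph0.symm
      _ ≤ _ := Cardinal.lift_le.2 hκ.le
  obtain ⟨a, ha, b, hb, hab⟩ := exists_pair_of_mk h1H
  have hpairs : ∀ x ∈ H, ∀ y ∈ H, x ≠ y → ({x, y} : Set Ordinal.{0}) ∈ nSets κ 2 :=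
    fun x hx y hy h => pair_mem_nSets (hH1 hx) (hH1 hy) h
  by_cases h0 : ∀ x ∈ ({a, b} : Set Ordinal.{0}), ∀ y ∈ ({a, b} : Set Ordinal.{0}), blk x = blk y
  · have hconst : ∀ β ∈ H, blk β = blk a := by
      intro β hβ
      by_cases hβa : β = a
      · rw [hβa]
      · have hc := homog _ (hpairs a ha β hβ (Ne.symm hβa)) _ (hpairs a ha b hb hab)
          (Set.pair_subset ha hβ) (Set.pair_subset ha hb)
        simp only [if_pos h0] at hc
        by_cases hP : ∀ x ∈ ({a, β} : Set Ordinal.{0}), ∀ y ∈ ({a, β} : Set Ordinal.{0}),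
            blk x = blk y
        · exact hP β (by simp) a (by simp)
        · rw [if_neg hP] at hc
          exact absurd hc (by decide)
    have hHsub : H ⊆ Set.Iic (f (blk a)) := by
      intro β hβ
      have h1 := hblk_le β (hH1 hβ)
      rwa [hconst β hβ] at h1
    have hfa : Order.succ (f (blk a)) < κ.ord := by
      refine (Cardinal.isSuccLimit_ord hκ.le).succ_lt ?_
      rw [← hlsub]; exact Ordinal.lt_lsub f _
    have hcard2 := Cardinal.mk_le_mk_of_subset hHsub
    rw [hH2, ← Order.Iio_succ, Ordinal.mk_Iio_ordinal, Cardinal.lift_le] at hcard2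
    exact absurd (Cardinal.lt_ord.1 hfa) (not_lt.2 hcard2)
  · have hinj : Set.InjOn blk H := by
      intro x hx y hy hxy
      by_contra hne2
      have hc := homog _ (hpairs x hx y hy hne2) _ (hpairs a ha b hb hab)
        (Set.pair_subset hx hy) (Set.pair_subset ha hb)
      have hx0 : (if ∀ u ∈ ({x, y} : Set Ordinal.{0}), ∀ v ∈ ({x, y} : Set Ordinal.{0}),
          blk u = blk v then (0 : Fin 2) else 1) = 0 := by
        refine if_pos ?_
        intro u hu v hv
        have e : ∀ w ∈ ({x, y} : Set Ordinal.{0}), blk w = blk x := by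
          intro w hw
          rcases hw with hw | hw
          · rw [hw]
          · rw [Set.mem_singleton_iff.1 hw]; exact hxy.symm
        exact (e u hu).trans (e v hv).symm
      rw [hx0, if_neg h0] at hc
      exact absurd hc (by decide)
    have hemb : Cardinal.lift.{0} #H ≤ Cardinal.lift.{1} #ι := by
      rw [Cardinal.lift_mk_le']
      exact ⟨⟨fun x => blk x, fun x y h => Subtype.ext (hinj x.2 y.2 h)⟩⟩
    rw [Cardinal.lift_uzero, hH2, hcard, Cardinal.lift_le] at hemb
    exact absurd hemb (not_le.2 hcof)

/-- The "forbidden set" at stage `ξ` of the recursion. -/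
def ESet (B : Set Ordinal.{0} → Set Ordinal.{0}) (f : Ordinal.{0} → Ordinal.{0})
    (ξ : Ordinal.{0}) : Set Ordinal.{0} :=
  {γ | ∃ η < ξ, γ ≤ f η} ∪ {γ | ∃ η < ξ, ∃ ζ < ξ, f η ≠ f ζ ∧ γ ∈ B {f η, f ζ}}

lemma ESet_congr {B : Set Ordinal.{0} → Set Ordinal.{0}} {f g : Ordinal.{0} → Ordinal.{0}}
    {ξ : Ordinal.{0}} (h : ∀ η < ξ, f η = g η) : ESet B f ξ = ESet B g ξ := by
  unfold ESet
  congr 1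
  · ext γ
    constructor
    · rintro ⟨η, hη, hγ⟩; exact ⟨η, hη, by rw [← h η hη]; exact hγ⟩
    · rintro ⟨η, hη, hγ⟩; exact ⟨η, hη, by rw [h η hη]; exact hγ⟩
  · ext γ
    constructor
    · rintro ⟨η, hη, ζ, hζ, hne, hγ⟩
      exact ⟨η, hη, ζ, hζ, by rw [← h η hη, ← h ζ hζ]; exact hne,
        by rw [← h η hη, ← h ζ hζ]; exact hγ⟩
    · rintro ⟨η, hη, ζ, hζ, hne, hγ⟩
      exact ⟨η, hη, ζ, hζ, by rw [h η hη, h ζ hζ]; exact hne,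
        by rw [h η hη, h ζ hζ]; exact hγ⟩

/-- The recursively constructed enumeration of the refined homogeneous set. -/
noncomputable def recf (H : Set Ordinal.{0}) (B : Set Ordinal.{0} → Set Ordinal.{0}) :
    Ordinal.{0} → Ordinal.{0} :=
  WellFounded.fix wellFounded_lt (fun ξ g =>
    sInf (H \ ESet B (fun η => if h : η < ξ then g η h else 0) ξ))

lemma recf_eq (H : Set Ordinal.{0}) (B : Set Ordinal.{0} → Set Ordinal.{0}) (ξ : Ordinal.{0}) :
    recf H B ξ = sInf (H \ ESet B (recf H B) ξ) := by
  rw [recf, WellFounded.fix_eq, ← recf]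
  exact congrArg (fun s => sInf (H \ s)) (ESet_congr fun η hη => dif_pos hη)

lemma ESet_card_lt {κ : Cardinal.{0}} (hκ : ℵ₀ ≤ κ)
    (hreg : (Cardinal.lift.{1} κ).IsRegular)
    {B : Set Ordinal.{0} → Set Ordinal.{0}} {f : Ordinal.{0} → Ordinal.{0}} {ξ : Ordinal.{0}}
    (hξ : ξ < κ.ord) (hf : ∀ η < ξ, f η < κ.ord)
    (hB : ∀ η < ξ, ∀ ζ < ξ, f η ≠ f ζ → #(B {f η, f ζ}) < Cardinal.lift.{1} κ) :
    #(ESet B f ξ) < Cardinal.lift.{1} κ := by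
  classical
  have hℵ : ℵ₀ ≤ Cardinal.lift.{1} κ := hreg.1
  have hι : #(Set.Iio ξ) < Cardinal.lift.{1} κ := by
    rw [Ordinal.mk_Iio_ordinal]
    exact Cardinal.lift_lt.2 (Cardinal.lt_ord.1 hξ)
  have c1 : #({γ | ∃ η < ξ, γ ≤ f η} : Set Ordinal.{0}) < Cardinal.lift.{1} κ := by
    have h1 : {γ | ∃ η < ξ, γ ≤ f η} ⊆ ⋃ η : Set.Iio ξ, Set.Iic (f η) := by
      rintro γ ⟨η, hη, hγ⟩
      exact Set.mem_iUnion.2 ⟨⟨η, hη⟩, hγ⟩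
    refine lt_of_le_of_lt (Cardinal.mk_le_mk_of_subset h1) ?_
    refine lt_of_le_of_lt (Cardinal.mk_iUnion_le _) (Cardinal.mul_lt_of_lt hℵ hι ?_)
    refine Cardinal.iSup_lt_of_isRegular hreg hι fun η => ?_
    have h2 : Order.succ (f ↑η) < κ.ord := (Cardinal.isSuccLimit_ord hκ).succ_lt (hf _ η.2)
    rw [← Order.Iio_succ, Ordinal.mk_Iio_ordinal]
    exact Cardinal.lift_lt.2 (Cardinal.lt_ord.1 h2)
  have c2 : #({γ | ∃ η < ξ, ∃ ζ < ξ, f η ≠ f ζ ∧ γ ∈ B {f η, f ζ}} : Set Ordinal.{0})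
      < Cardinal.lift.{1} κ := by
    have h2 : {γ | ∃ η < ξ, ∃ ζ < ξ, f η ≠ f ζ ∧ γ ∈ B {f η, f ζ}} ⊆
        ⋃ p : Set.Iio ξ × Set.Iio ξ,
          if f (p.1 : Ordinal) ≠ f (p.2 : Ordinal) then B {f p.1, f p.2} else ∅ := by
      rintro γ ⟨η, hη, ζ, hζ, hne, hγ⟩
      exact Set.mem_iUnion.2 ⟨(⟨η, hη⟩, ⟨ζ, hζ⟩), by simp only [if_pos hne]; exact hγ⟩
    have hp : #(Set.Iio ξ × Set.Iio ξ : Type 1) < Cardinal.lift.{1} κ := by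
      simp only [Cardinal.mk_prod, Cardinal.lift_id]
      exact Cardinal.mul_lt_of_lt hℵ hι hι
    refine lt_of_le_of_lt (Cardinal.mk_le_mk_of_subset h2) ?_
    refine lt_of_le_of_lt (Cardinal.mk_iUnion_le _) (Cardinal.mul_lt_of_lt hℵ hp ?_)
    refine Cardinal.iSup_lt_of_isRegular hreg hp fun p => ?_
    by_cases h : f (p.1 : Ordinal) ≠ f (p.2 : Ordinal)
    · rw [if_pos h]
      exact hB _ p.1.2 _ p.2.2 h
    · rw [if_neg h]
      simpa using Cardinal.aleph0_pos.trans_le hℵ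
  exact lt_of_le_of_lt (Cardinal.mk_union_le _ _) (Cardinal.add_lt_of_lt hℵ c1 c2)

end Aux

/-- Let `κ` be an uncountable cardinal with the partition
property `κ → (κ)²₂`.  Then every set in `Σ([κ]^2, [κ]^{<κ})` is Ramsey. -/
theorem statement7 (κ : Cardinal.{0}) (hκ : ℵ₀ < κ)
    (hpart : ∀ c : Set Ordinal.{0} → Fin 2,
      ∃ H, H ⊆ Set.Iio κ.ord ∧ #H = Cardinal.lift.{1} κ ∧
        ∀ A₁ ∈ nSets κ 2, ∀ A₂ ∈ nSets κ 2, A₁ ⊆ H → A₂ ⊆ H → c A₁ = c A₂) :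
    ∀ S ∈ SigmaFam κ (nSets κ 2) (smallSets κ κ), IsRamsey κ S := by
  classical
  intro S hS
  obtain ⟨Q, hQ, rfl⟩ := hS
  have hκ0 : ℵ₀ ≤ Cardinal.lift.{1} κ := Cardinal.aleph0_le_lift.2 hκ.le
  have hreg : κ.IsRegular := isRegular_of_hpart κ hκ hpart
  have hregL : (Cardinal.lift.{1} κ).IsRegular := by
    refine ⟨hκ0, ?_⟩
    rw [← Cardinal.lift_ord, ← Ordinal.lift_cof]
    exact Cardinal.lift_le.2 hreg.2
  obtain ⟨H, hH1, hH2, homog⟩ := hpart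
    (fun A => if ∃ B', (A, B') ∈ Q then 1 else 0)
  by_cases hpos : ∃ A ∈ nSets κ 2, A ⊆ H ∧ ∃ B', (A, B') ∈ Q
  swap
  · -- negative case: no pair inside H carries a pattern
    refine ⟨H, ⟨hH1, hH2⟩, Or.inr ?_⟩
    rw [Set.eq_empty_iff_forall_notMem]
    rintro X ⟨⟨hXH, hXcard⟩, _, p, hpQ, hpX, _⟩
    exact hpos ⟨p.1, (hQ p hpQ).1, hpX.trans hXH, p.2, by rwa [Prod.mk.eta]⟩
  · -- positive case: every pair inside H carries a pattern
    obtain ⟨A₀, hA₀n, hA₀H, B₀, hB₀⟩ := hpos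
    have hall : ∀ A, A ∈ nSets κ 2 → A ⊆ H → ∃ B', (A, B') ∈ Q := by
      intro A hAn hAH
      have hcA := homog A hAn A₀ hA₀n hAH hA₀H
      by_contra hno
      rw [if_neg hno, if_pos ⟨B₀, hB₀⟩] at hcA
      exact absurd hcA (by decide)
    have hch : ∀ A : Set Ordinal.{0}, ∃ B', A ∈ nSets κ 2 → A ⊆ H → (A, B') ∈ Q := by
      intro A
      by_cases h : A ∈ nSets κ 2 ∧ A ⊆ H
      · obtain ⟨B', hB'⟩ := hall A h.1 h.2
        exact ⟨B', fun _ _ => hB'⟩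
      · exact ⟨∅, fun h1 h2 => absurd ⟨h1, h2⟩ h⟩
    choose Bf hBf using hch
    have hgood : ∀ A, A ∈ nSets κ 2 → A ⊆ H →
        (A, Bf A) ∈ Q ∧ #(Bf A) < Cardinal.lift.{1} κ ∧ Disjoint A (Bf A) := by
      intro A h1 h2
      have hq := hBf A h1 h2
      exact ⟨hq, (hQ _ hq).2.1.2, (hQ _ hq).2.2⟩
    -- the recursion
    have key : ∀ ξ, ξ < κ.ord → recf H Bf ξ ∈ H \ ESet Bf (recf H Bf) ξ := by
      intro ξ
      induction ξ using Ordinal.induction with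
      | h ξ IH =>
        intro hξ
        have hfmem : ∀ η < ξ, recf H Bf η ∈ H := fun η hη => (IH η hη (hη.trans hξ)).1
        have hflt : ∀ η < ξ, recf H Bf η < κ.ord := fun η hη => hH1 (hfmem η hη)
        have hBsmall : ∀ η < ξ, ∀ ζ < ξ, recf H Bf η ≠ recf H Bf ζ →
            #(Bf {recf H Bf η, recf H Bf ζ}) < Cardinal.lift.{1} κ := by
          intro η hη ζ hζ hne
          exact (hgood _ (pair_mem_nSets (hflt η hη) (hflt ζ hζ) hne)
            (Set.pair_subset (hfmem η hη) (hfmem ζ hζ))).2.1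
        have hE := ESet_card_lt hκ.le hregL hξ hflt hBsmall
        have hne : (H \ ESet Bf (recf H Bf) ξ).Nonempty := by
          rw [Set.nonempty_iff_ne_empty]
          intro h
          have hsub : H ⊆ ESet Bf (recf H Bf) ξ := by
            intro x hx
            by_contra hx2
            exact (Set.eq_empty_iff_forall_notMem.1 h) x ⟨hx, hx2⟩
          have hle := Cardinal.mk_le_mk_of_subset hsub
          rw [hH2] at hle
          exact absurd hle (not_le.2 hE)
        rw [recf_eq]
        exact csInf_mem hne
    have hmono : ∀ η ζ, η < ζ → ζ < κ.ord → recf H Bf η < recf H Bf ζ := by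
      intro η ζ hηζ hζ
      by_contra hle
      exact (key ζ hζ).2 (Set.mem_union_left _ ⟨η, hηζ, not_lt.1 hle⟩)
    have hlt_of : ∀ η ζ, η < κ.ord → ζ < κ.ord → recf H Bf η < recf H Bf ζ → η < ζ := by
      intro η ζ hη hζ h
      by_contra hle
      rcases eq_or_lt_of_le (not_lt.1 hle) with heq | hlt
      · rw [heq] at h; exact lt_irrefl _ h
      · exact absurd (hmono ζ η hlt hη) (not_lt.2 h.le)
    have hinj : Set.InjOn (recf H Bf) (Set.Iio κ.ord) := by
      intro x hx y hy hxy
      by_contra hne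
      rcases lt_or_gt_of_ne hne with h | h
      · exact absurd hxy (ne_of_lt (hmono x y h hy))
      · exact absurd hxy.symm (ne_of_lt (hmono y x h hx))
    have hH'H : recf H Bf '' Set.Iio κ.ord ⊆ H := by
      rintro _ ⟨ξ, hξ, rfl⟩; exact (key ξ hξ).1
    have hH'card : #(recf H Bf '' Set.Iio κ.ord) = Cardinal.lift.{1} κ := by
      rw [Cardinal.mk_image_eq_of_injOn _ _ hinj, Ordinal.mk_Iio_ordinal, Cardinal.card_ord]
    refine ⟨recf H Bf '' Set.Iio κ.ord, ⟨hH'H.trans hH1, hH'card⟩, Or.inl ?_⟩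
    rintro X ⟨hXH', hXcard⟩
    refine ⟨⟨hXH'.trans (hH'H.trans hH1), hXcard⟩, ?_⟩
    have hXne : X.Nonempty := by
      rw [Set.nonempty_iff_ne_empty]
      intro h
      rw [h, Cardinal.mk_emptyCollection] at hXcard
      have : Cardinal.lift.{1} κ ≠ 0 := by
        simp only [ne_eq, Cardinal.lift_eq_zero]
        exact (Cardinal.aleph0_pos.trans hκ).ne'
      exact this hXcard.symm
    have ha : sInf X ∈ X := csInf_mem hXne
    set a := sInf X with hadef
    have hX2 : (X \ {a}).Nonempty := by
      rw [Set.nonempty_iff_ne_empty]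
      intro h
      have hsub : X ⊆ {a} := by
        intro x hx
        by_contra h2
        exact (Set.eq_empty_iff_forall_notMem.1 h) x ⟨hx, h2⟩
      have hle := Cardinal.mk_le_mk_of_subset hsub
      rw [hXcard, Cardinal.mk_singleton] at hle
      exact absurd (hle.trans_lt Cardinal.one_lt_aleph0) (not_lt.2 hκ0)
    have hb : sInf (X \ {a}) ∈ X \ {a} := csInf_mem hX2
    set b := sInf (X \ {a}) with hbdef
    have hba : b ≠ a := by simpa [Set.mem_singleton_iff] using hb.2
    have hab : a < b := lt_of_le_of_ne (csInf_le (OrderBot.bddBelow X) hb.1) hba.symm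
    obtain ⟨ηa, hηa, hfa⟩ := hXH' ha
    obtain ⟨ηb, hηb, hfb⟩ := hXH' hb.1
    have haH : a ∈ H := hH'H (hXH' ha)
    have hbH : b ∈ H := hH'H (hXH' hb.1)
    have hpairn : ({a, b} : Set Ordinal.{0}) ∈ nSets κ 2 :=
      pair_mem_nSets (hH1 haH) (hH1 hbH) hab.ne
    obtain ⟨hABQ, hBsm, hdisj⟩ := hgood _ hpairn (Set.pair_subset haH hbH)
    refine ⟨({a, b}, Bf {a, b}), hABQ, Set.pair_subset ha hb.1, ?_⟩
    rw [Set.eq_empty_iff_forall_notMem]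
    rintro γ ⟨hγB, hγX⟩
    by_cases hγab : γ ∈ ({a, b} : Set Ordinal.{0})
    · exact Set.disjoint_left.1 hdisj hγab hγB
    · have hγa : γ ≠ a := fun h => hγab (by simp [h])
      have hγb : γ ≠ b := fun h => hγab (by simp [h])
      have hbγ : b < γ :=
        lt_of_le_of_ne (csInf_le (OrderBot.bddBelow _) ⟨hγX, by simpa using hγa⟩) hγb.symm
      obtain ⟨ζ, hζ, hfζ⟩ := hXH' hγX
      have hηaζ : ηa < ζ := hlt_of _ _ hηa hζ (by rw [hfa, hfζ]; exact hab.trans hbγ)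
      have hηbζ : ηb < ζ := hlt_of _ _ hηb hζ (by rw [hfb, hfζ]; exact hbγ)
      have hne2 : recf H Bf ηa ≠ recf H Bf ηb := by rw [hfa, hfb]; exact hab.ne
      refine (key ζ hζ).2 (Set.mem_union_right _ ⟨ηa, hηaζ, ηb, hηbζ, hne2, ?_⟩)
      rw [hfa, hfb, hfζ]
      exact hγB
end

section
/- Let κ be an uncountable cardinal such that for every n ∈ ω, every cardinal μ < κ, and every coloring d : [κ]^n → μ, there is H ⊆ κ of cardinality κ with d constant on [H]^n (this holds when κ is weakly compact). Let 1 ≤ λ < κ be a cardinal, let n ∈ ω, and let c : [κ]^κ → λ+1 be a function such that for each α < λ, the preimage c⁻¹(α) is in Σ([κ]^n, [κ]^{<κ}) (no requirement is placed on c⁻¹(λ)). Then c is Ramsey, i.e., there is H ∈ [κ]^κ such that c is constant on [H]^κ. -/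
open Set Cardinal

universe u

lemma card_add_one_lt {μ : Cardinal.{u}} {o : Ordinal.{u}} (hμ : ℵ₀ ≤ μ) (h : o.card < μ) :
    (o + 1).card < μ := by
  rw [Ordinal.add_one_eq_succ, Ordinal.card_succ]
  rcases lt_or_ge o.card ℵ₀ with h' | h'
  · exact lt_of_lt_of_le (Cardinal.add_lt_aleph0 h' Cardinal.one_lt_aleph0) hμ
  · rwa [Cardinal.add_one_eq h']

noncomputable def remSeq (X : Set Ordinal.{0}) : ℕ → Set Ordinal.{0}
  | 0 => X
  | (k+1) => remSeq X k \ {sInf (remSeq X k)}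

lemma firstn (X : Set Ordinal.{0}) (hX : X.Infinite) (n : ℕ) :
    ∃ A : Set Ordinal.{0}, A ⊆ X ∧ #A = n ∧ ∀ x ∈ X, x ∉ A → ∀ a ∈ A, a < x := by
  set f : ℕ → Ordinal.{0} := fun k => sInf (remSeq X k) with hf
  have hInf : ∀ k, (remSeq X k).Infinite := by
    intro k; induction k with
    | zero => exact hX
    | succ k ih => exact ih.diff (Set.finite_singleton _)
  have hmem : ∀ k, f k ∈ remSeq X k := fun k => csInf_mem (hInf k).nonempty
  have hsubX : ∀ k, remSeq X k ⊆ X := by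
    intro k; induction k with
    | zero => exact fun x hx => hx
    | succ k ih => exact fun x hx => ih (hx.1)
  have key : ∀ k, ∀ x ∈ remSeq X (k+1), f k < x := by
    intro k x hx
    exact lt_of_le_of_ne (csInf_le' hx.1) (fun h => hx.2 h.symm)
  have step : ∀ j k, j < k → ∀ x ∈ remSeq X k, f j < x := by
    intro j k
    induction k with
    | zero => omega
    | succ k ih =>
      intro hjk x hx
      rcases Nat.lt_succ_iff_lt_or_eq.mp hjk with h | h
      · exact ih h x hx.1
      · subst h; exact key j x hx
  refine ⟨f '' {k | k < n}, ?_, ?_, ?_⟩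
  · rintro a ⟨k, _, rfl⟩; exact hsubX k (hmem k)
  · have : ∀ m : ℕ, #(f '' {k | k < m}) = m := by
      intro m; induction m with
      | zero => simp
      | succ m ih =>
        have hset : {k | k < m + 1} = insert m {k | k < m} := by
          ext k; simp only [Set.mem_setOf_eq, Set.mem_insert_iff]; omega
        have hnot : f m ∉ f '' {k | k < m} := by
          rintro ⟨j, hj, hje⟩
          have := step j m hj (f m) (hmem m)
          rw [hje] at this; exact lt_irrefl _ this
        rw [hset, Set.image_insert_eq, Cardinal.mk_insert hnot, ih]
        push_cast; ring
    exact this n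
  · rintro x hxX hxA a ⟨k, hk, rfl⟩
    have hx : ∀ j, j ≤ n → x ∈ remSeq X j := by
      intro j
      induction j with
      | zero => exact fun _ => hxX
      | succ j ih =>
        intro hj
        refine ⟨ih (by omega), ?_⟩
        intro hxe
        exact hxA ⟨j, show j < n by omega, by simp at hxe; exact hxe.symm⟩
    have hk' : k < n := hk
    exact step k (k+1) (Nat.lt_succ_self k) x (hx (k+1) (by omega))

lemma my_small_iUnion {κ : Cardinal.{0}} (hreg : (Cardinal.lift.{1} κ).IsRegular)
    {ι : Type 1} (T : ι → Set Ordinal.{0}) (hι : #ι < Cardinal.lift.{1} κ)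
    (hT : ∀ i, #(T i) < Cardinal.lift.{1} κ) : #(⋃ i, T i) < Cardinal.lift.{1} κ :=
  lt_of_le_of_lt (Cardinal.mk_iUnion_le T)
    (Cardinal.mul_lt_of_lt hreg.1 hι (Cardinal.iSup_lt_of_isRegular hreg hι hT))

lemma mk_tuple_le (n : ℕ) (σ : Type 1) : #(Fin n → σ) ≤ (#σ ⊔ ℵ₀) := by
  have h1 : #(Fin n → σ) = #σ ^ (n : Cardinal.{1}) := by
    rw [Cardinal.mk_arrow, Cardinal.lift_uzero, Cardinal.mk_fin, Cardinal.lift_natCast]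
  rw [h1, Cardinal.power_natCast]
  calc #σ ^ n ≤ (#σ ⊔ ℵ₀) ^ n := by
        exact pow_le_pow_left' (le_max_left _ _) n
    _ ≤ #σ ⊔ ℵ₀ := by
        rw [← Cardinal.power_natCast, Cardinal.power_natCast]
        exact Cardinal.power_nat_le (le_max_right _ _)

lemma exists_tuple_range {n : ℕ} {A P : Set Ordinal.{0}} (hAP : A ⊆ P) (hA : #A = n) :
    ∃ s : Fin n → P, (Set.range fun k => (s k : Ordinal)) = A := by
  have h0 : #(ULift.{1} (Fin n)) = (n : Cardinal.{1}) := by simp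
  rw [← h0] at hA
  obtain ⟨e⟩ := Cardinal.eq.mp hA
  refine ⟨fun k => ⟨(e.symm ⟨k⟩ : Ordinal), hAP (e.symm ⟨k⟩).2⟩, ?_⟩
  ext x
  constructor
  · rintro ⟨k, rfl⟩; exact (e.symm ⟨k⟩).2
  · intro hx
    refine ⟨(e ⟨x, hx⟩).down, ?_⟩
    show ((e.symm (e ⟨x, hx⟩) : A) : Ordinal) = x
    rw [Equiv.symm_apply_apply]

noncomputable def buildSeq (S : Set Ordinal.{0}) (F : Set Ordinal.{0} → Set Ordinal.{0}) :
    Ordinal.{0} → Ordinal.{0} :=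
  Ordinal.lt_wf.fix fun i rec => sInf (S \ F {x | ∃ j : Ordinal, ∃ h : j < i, rec j h = x})

lemma buildSeq_eq (S : Set Ordinal.{0}) (F : Set Ordinal.{0} → Set Ordinal.{0})
    (i : Ordinal.{0}) :
    buildSeq S F i = sInf (S \ F (buildSeq S F '' Set.Iio i)) := by
  have h := WellFounded.fix_eq Ordinal.lt_wf
    (fun i rec => sInf (S \ F {x | ∃ j : Ordinal, ∃ h : j < i, rec j h = x})) i
  have hset : {x | ∃ j : Ordinal, ∃ _ : j < i, Ordinal.lt_wf.fix
      (fun i rec => sInf (S \ F {x | ∃ j : Ordinal, ∃ h : j < i, rec j h = x})) j = x}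
      = (buildSeq S F '' Set.Iio i) := by
    ext x
    constructor
    · rintro ⟨j, hj, rfl⟩; exact ⟨j, hj, rfl⟩
    · rintro ⟨j, hj, rfl⟩; exact ⟨j, hj, rfl⟩
  show Ordinal.lt_wf.fix _ i = _
  rw [h, hset]

lemma regular_of_part {κ : Cardinal.{0}} (hκ : ℵ₀ < κ)
    (hpart : ∀ (n : ℕ) (μ : Cardinal.{0}), μ < κ →
      ∀ d : Set Ordinal.{0} → Ordinal.{0},
        (∀ A ∈ nSets κ n, d A < μ.ord) →
        ∃ H, H ⊆ Set.Iio κ.ord ∧ #H = Cardinal.lift.{1} κ ∧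
          ∀ A₁ ∈ nSets κ n, ∀ A₂ ∈ nSets κ n, A₁ ⊆ H → A₂ ⊆ H → d A₁ = d A₂) :
    κ.IsRegular := by
  refine ⟨hκ.le, ?_⟩
  by_contra hcof
  push_neg at hcof
  obtain ⟨f, hf⟩ := Ordinal.exists_blsub_cof κ.ord
  set f' : Ordinal.{0} → Ordinal.{0} :=
    fun i => if h : i < κ.ord.cof.ord then f i h else 0 with hf'
  have hfκ : ∀ i, f' i < κ.ord := by
    intro i
    rw [hf']
    dsimp only
    split
    · rw [← hf]; exact Ordinal.lt_blsub f i _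
    · rw [← Cardinal.ord_zero]
      exact Cardinal.ord_lt_ord.mpr (lt_of_le_of_lt zero_le hκ)
  have hcofinal : ∀ x, x < κ.ord → ∃ i, i < κ.ord.cof.ord ∧ x ≤ f' i := by
    intro x hx
    rw [← hf] at hx
    obtain ⟨i, hi, hxi⟩ := Ordinal.lt_blsub_iff.mp hx
    refine ⟨i, hi, ?_⟩
    rw [hf']
    simpa [hi] using hxi
  set SA : Set Ordinal.{0} → Set Ordinal.{0} :=
    fun A => {i | i < κ.ord.cof.ord ∧ ∀ x ∈ A, x ≤ f' i} with hSA
  set d : Set Ordinal.{0} → Ordinal.{0} := fun A => sInf (SA A) with hd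
  have hsing : ∀ A ∈ nSets κ 1, ∃ x, x ∈ Set.Iio κ.ord ∧ A = {x} := by
    rintro A ⟨hsub, hcard⟩
    have h1 : A.Nonempty := by
      rw [← Set.nonempty_coe_sort, ← Cardinal.mk_ne_zero_iff, hcard]
      simp
    obtain ⟨x, hx⟩ := h1
    refine ⟨x, hsub hx, ?_⟩
    have hss : A.Subsingleton := by
      rw [← Cardinal.mk_le_one_iff_set_subsingleton, hcard]
      norm_num
    exact hss.eq_singleton_of_mem hx
  have hdbound : ∀ A ∈ nSets κ 1, d A < κ.ord.cof.ord := by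
    intro A hA
    obtain ⟨x, hxκ, rfl⟩ := hsing A hA
    obtain ⟨i, hi, hxi⟩ := hcofinal x hxκ
    have hne : (SA {x}).Nonempty := ⟨i, hi, fun y hy => by rwa [Set.mem_singleton_iff.mp hy]⟩
    exact (csInf_mem hne).1
  obtain ⟨H, hHsub, hHcard, hhom⟩ := hpart 1 κ.ord.cof hcof d hdbound
  have hHne : H.Nonempty := by
    rw [← Set.nonempty_coe_sort, ← Cardinal.mk_ne_zero_iff, hHcard]
    exact ne_of_gt (lt_of_lt_of_le Cardinal.aleph0_pos (Cardinal.aleph0_le_lift.mpr hκ.le))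
  obtain ⟨x₀, hx₀⟩ := hHne
  have hmemn : ∀ x ∈ H, ({x} : Set Ordinal.{0}) ∈ nSets κ 1 := by
    intro x hx
    exact ⟨by simpa using hHsub hx, by simp⟩
  have hbd : ∀ x ∈ H, x ≤ f' (d {x₀}) := by
    intro x hx
    have hdx : d {x} = d {x₀} := hhom _ (hmemn x hx) _ (hmemn x₀ hx₀) (by simpa using hx)
      (by simpa using hx₀)
    have hne : (SA {x}).Nonempty := by
      obtain ⟨i, hi, hxi⟩ := hcofinal x (hHsub hx)
      exact ⟨i, hi, fun y hy => by rwa [Set.mem_singleton_iff.mp hy]⟩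
    have h2 := (csInf_mem hne).2 x rfl
    rwa [show sInf (SA {x}) = d {x₀} from hdx] at h2
  have hsubIio : H ⊆ Set.Iio (f' (d {x₀}) + 1) := by
    intro x hx
    exact lt_of_le_of_lt (hbd x hx)
      (lt_of_lt_of_le (Order.lt_succ _) (Ordinal.add_one_eq_succ _).ge)
  have hle : Cardinal.lift.{1} κ ≤ Cardinal.lift.{1} (f' (d {x₀}) + 1).card := by
    rw [← hHcard, ← Ordinal.mk_Iio_ordinal]
    exact Cardinal.mk_le_mk_of_subset hsubIio
  have hlt : (f' (d {x₀}) + 1).card < κ := card_add_one_lt hκ.le (Cardinal.lt_ord.mp (hfκ _))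
  exact absurd (Cardinal.lift_le.mp hle) (not_le.mpr hlt)

lemma regular_lift {κ : Cardinal.{0}} (h : κ.IsRegular) :
    (Cardinal.lift.{1} κ).IsRegular := by
  constructor
  · exact Cardinal.aleph0_le_lift.mpr h.1
  · rw [← Cardinal.lift_ord, ← Ordinal.lift_cof]
    exact Cardinal.lift_le.mpr h.2

/-- Let `κ` be an uncountable cardinal such that every coloring
of `[κ]^n` with `μ < κ` colors has a homogeneous set of cardinality `κ`
(`n ∈ ω`, `μ` arbitrary).  Let `1 ≤ λ < κ` and let `c : [κ]^κ → λ+1` be such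
that `c⁻¹(α) ∈ Σ([κ]^n, [κ]^{<κ})` for each `α < λ` (nothing is assumed about
`c⁻¹(λ)`).  Then `c` is Ramsey. -/
theorem statement8 (κ : Cardinal.{0}) (hκ : ℵ₀ < κ)
    (hpart : ∀ (n : ℕ) (μ : Cardinal.{0}), μ < κ →
      ∀ d : Set Ordinal.{0} → Ordinal.{0},
        (∀ A ∈ nSets κ n, d A < μ.ord) →
        ∃ H, H ⊆ Set.Iio κ.ord ∧ #H = Cardinal.lift.{1} κ ∧
          ∀ A₁ ∈ nSets κ n, ∀ A₂ ∈ nSets κ n, A₁ ⊆ H → A₂ ⊆ H → d A₁ = d A₂)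
    (lam : Cardinal.{0}) (hlam1 : 1 ≤ lam) (hlamκ : lam < κ) (n : ℕ)
    (c : Set Ordinal.{0} → Ordinal.{0})
    (hc : ∀ X ∈ bigSets κ, c X ≤ lam.ord)
    (hpre : ∀ α < lam.ord,
      {X ∈ bigSets κ | c X = α} ∈ SigmaFam κ (nSets κ n) (smallSets κ κ)) :
    ∃ H ∈ bigSets κ, ∀ X ∈ subBig κ H, ∀ Y ∈ subBig κ H, c X = c Y := by
  classical
  have hQex : ∀ α : Ordinal.{0}, ∃ Q : Set (Set Ordinal.{0} × Set Ordinal.{0}),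
      α < lam.ord →
      ((∀ p ∈ Q, p.1 ∈ nSets κ n ∧ p.2 ∈ smallSets κ κ ∧ Disjoint p.1 p.2) ∧
        {X ∈ bigSets κ | c X = α} = {X ∈ bigSets κ | ∃ p ∈ Q, Matches X p.1 p.2}) := by
    intro α
    by_cases hα : α < lam.ord
    · obtain ⟨Q, hQ1, hQ2⟩ := hpre α hα
      exact ⟨Q, fun _ => ⟨hQ1, hQ2⟩⟩
    · exact ⟨∅, fun h => absurd h hα⟩
  choose Q hQ using hQex
  set SA : Set Ordinal.{0} → Set Ordinal.{0} :=
    fun A => {α | α < lam.ord ∧ ∃ p ∈ Q α, p.1 = A} with hSA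
  set d : Set Ordinal.{0} → Ordinal.{0} :=
    fun A => if h : (SA A).Nonempty then sInf (SA A) + 1 else 0 with hd
  have hμκ : max lam ℵ₀ < κ := max_lt hlamκ hκ
  have hμinf : ℵ₀ ≤ max lam ℵ₀ := le_max_right _ _
  have hliftκinf : (ℵ₀ : Cardinal.{1}) ≤ Cardinal.lift.{1} κ :=
    Cardinal.aleph0_le_lift.mpr hκ.le
  have haleph : (ℵ₀ : Cardinal.{1}) < Cardinal.lift.{1} κ := by
    rw [← Cardinal.lift_aleph0.{1,0}]
    exact Cardinal.lift_lt.mpr hκ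
  have hdbound : ∀ A ∈ nSets κ n, d A < (max lam ℵ₀).ord := by
    intro A _
    rw [hd]
    dsimp only
    split
    case isTrue h =>
      have hmem := csInf_mem h
      apply Cardinal.lt_ord.mpr
      apply card_add_one_lt hμinf
      exact lt_of_lt_of_le (Cardinal.lt_ord.mp hmem.1) (le_max_left _ _)
    case isFalse h =>
      apply Cardinal.lt_ord.mpr
      rw [Ordinal.card_zero]
      exact lt_of_lt_of_le Cardinal.aleph0_pos hμinf
  obtain ⟨H₁, hH₁sub, hH₁card, hhom⟩ := hpart n (max lam ℵ₀) hμκ d hdbound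
  have hH₁inf : H₁.Infinite := by
    rw [← Set.infinite_coe_iff, Cardinal.infinite_iff, hH₁card]
    exact hliftκinf
  obtain ⟨A0, hA0sub, hA0card, _⟩ := firstn H₁ hH₁inf n
  have hA0n : A0 ∈ nSets κ n := ⟨hA0sub.trans hH₁sub, hA0card⟩
  have hdconst : ∀ A ∈ nSets κ n, A ⊆ H₁ → d A = d A0 :=
    fun A hA hAH => hhom A hA A0 hA0n hAH hA0sub
  by_cases hv0 : d A0 = 0
  · -- Case 1 : no n-subset of H₁ starts a pattern; c is constantly lam.ord on [H₁]^κ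
    refine ⟨H₁, ⟨hH₁sub, hH₁card⟩, ?_⟩
    have hkey : ∀ X ∈ subBig κ H₁, c X = lam.ord := by
      intro X hX
      have hXbig : X ∈ bigSets κ := ⟨hX.1.trans hH₁sub, hX.2⟩
      rcases lt_or_eq_of_le (hc X hXbig) with hlt | heq
      · exfalso
        obtain ⟨hQ1, hQ2⟩ := hQ (c X) hlt
        have hX2 : X ∈ {X' | X' ∈ bigSets κ ∧ c X' = c X} := ⟨hXbig, rfl⟩
        rw [hQ2] at hX2
        obtain ⟨-, p, hpQ, hpM⟩ := hX2
        have hp1 := (hQ1 p hpQ).1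
        have hne : (SA p.1).Nonempty := ⟨c X, hlt, p, hpQ, rfl⟩
        have hdp := hdconst p.1 hp1 (hpM.1.trans hX.1)
        rw [hv0, hd] at hdp
        dsimp only at hdp
        rw [dif_pos hne] at hdp
        rw [Ordinal.add_one_eq_succ] at hdp
        exact Ordinal.succ_ne_zero _ hdp
      · exact heq
    intro X hX Y hY
    rw [hkey X hX, hkey Y hY]
  · -- Case 2 : every n-subset of H₁ starts a pattern with the same colour α₀
    have hvsucc : ∀ A ∈ nSets κ n, A ⊆ H₁ → (SA A).Nonempty ∧ sInf (SA A) + 1 = d A0 := by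
      intro A hA hAH
      have hdA := hdconst A hA hAH
      rw [hd] at hdA
      dsimp only at hdA
      by_cases h : (SA A).Nonempty
      · rw [dif_pos h] at hdA
        exact ⟨h, hdA⟩
      · rw [dif_neg h] at hdA
        exact absurd hdA.symm hv0
    have hA0ne := hvsucc A0 hA0n hA0sub
    have hα₀mem := csInf_mem hA0ne.1
    have hα₀lam : sInf (SA A0) < lam.ord := hα₀mem.1
    set α₀ := sInf (SA A0) with hα₀
    have hsame : ∀ A ∈ nSets κ n, A ⊆ H₁ → ∃ p ∈ Q α₀, p.1 = A := by
      intro A hA hAH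
      obtain ⟨hne, hsucc⟩ := hvsucc A hA hAH
      have h2 : sInf (SA A) = α₀ := by
        have h3 : sInf (SA A) + 1 = α₀ + 1 := by rw [hsucc, hA0ne.2]
        rw [Ordinal.add_one_eq_succ, Ordinal.add_one_eq_succ] at h3
        exact Order.succ_injective h3
      have hm := csInf_mem hne
      rw [h2] at hm
      exact hm.2
    have hBex : ∀ A : Set Ordinal.{0}, ∃ B : Set Ordinal.{0},
        B ⊆ Set.Iio κ.ord ∧ #B < Cardinal.lift.{1} κ ∧
        (A ∈ nSets κ n ∧ A ⊆ H₁ → (A, B) ∈ Q α₀ ∧ Disjoint A B) := by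
      intro A
      by_cases h : A ∈ nSets κ n ∧ A ⊆ H₁
      · obtain ⟨p, hpQ, hp1⟩ := hsame A h.1 h.2
        obtain ⟨-, hp2, hdisj⟩ := (hQ α₀ hα₀lam).1 p hpQ
        refine ⟨p.2, hp2.1, hp2.2, fun _ => ⟨?_, ?_⟩⟩
        · rw [← hp1, Prod.mk.eta]; exact hpQ
        · rw [← hp1]; exact hdisj
      · refine ⟨∅, Set.empty_subset _, ?_, fun hx => absurd hx h⟩
        rw [Cardinal.mk_emptyCollection]
        exact lt_of_lt_of_le Cardinal.aleph0_pos hliftκinf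
    choose Bof hBsub hBsmall hBQ using hBex
    set F : Set Ordinal.{0} → Set Ordinal.{0} := fun P =>
      (⋃ s : Fin n → P, Bof (Set.range fun k => ((s k : Ordinal)))) ∪
      (⋃ y : P, Set.Iio ((y : Ordinal) + 1)) with hF
    set xi := buildSeq H₁ F with hxi
    have heq : ∀ i, xi i = sInf (H₁ \ F (xi '' Set.Iio i)) := by
      intro i
      rw [hxi]
      exact buildSeq_eq H₁ F i
    have hreg := regular_lift (regular_of_part hκ hpart)
    have main : ∀ i, i < κ.ord → xi i ∈ H₁ \ F (xi '' Set.Iio i) := by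
      intro i
      induction i using Ordinal.induction with
      | _ i IH =>
        intro hi
        have hPsub : xi '' Set.Iio i ⊆ H₁ := by
          rintro _ ⟨j, hj, rfl⟩
          exact (IH j hj (hj.trans hi)).1
        have hPcard : #(xi '' Set.Iio i) < Cardinal.lift.{1} κ := by
          apply lt_of_le_of_lt Cardinal.mk_image_le
          rw [Ordinal.mk_Iio_ordinal]
          exact Cardinal.lift_lt.mpr (Cardinal.lt_ord.mp hi)
        have hFsmall : #(F (xi '' Set.Iio i)) < Cardinal.lift.{1} κ := by
          rw [hF]
          dsimp only
          apply lt_of_le_of_lt (Cardinal.mk_union_le _ _)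
          apply Cardinal.add_lt_of_lt hliftκinf
          · apply my_small_iUnion hreg
            · exact lt_of_le_of_lt (mk_tuple_le n _) (max_lt hPcard haleph)
            · intro s
              exact hBsmall _
          · apply my_small_iUnion hreg
            · exact hPcard
            · rintro ⟨y, hy⟩
              rw [Ordinal.mk_Iio_ordinal]
              apply Cardinal.lift_lt.mpr
              apply Cardinal.lt_ord.mp
              rw [Cardinal.lt_ord]
              exact card_add_one_lt hκ.le (Cardinal.lt_ord.mp (hH₁sub (hPsub hy)))
        have hne : (H₁ \ F (xi '' Set.Iio i)).Nonempty := by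
          rw [Set.diff_nonempty]
          intro hsub
          exact absurd (hH₁card ▸ Cardinal.mk_le_mk_of_subset hsub) (not_le.mpr hFsmall)
        rw [heq i]
        exact csInf_mem hne
    have hxiH : ∀ i, i < κ.ord → xi i ∈ H₁ := fun i hi => (main i hi).1
    have hmono : ∀ j i, j < i → i < κ.ord → xi j < xi i := by
      intro j i hj hi
      have h2 := (main i hi).2
      have h3 : xi i ∉ Set.Iio (xi j + 1) := by
        intro hmem
        apply h2
        rw [hF]
        apply Set.mem_union_right
        exact Set.mem_iUnion.mpr ⟨⟨xi j, ⟨j, hj, rfl⟩⟩, hmem⟩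
      have h4 : xi j + 1 ≤ xi i := not_lt.mp h3
      exact lt_of_lt_of_le (by rw [Ordinal.add_one_eq_succ]; exact Order.lt_succ _) h4
    have hinj : Set.InjOn xi (Set.Iio κ.ord) := by
      intro a ha b hb hab
      rcases lt_trichotomy a b with h | h | h
      · exact absurd hab (ne_of_lt (hmono a b h hb))
      · exact h
      · exact absurd hab.symm (ne_of_lt (hmono b a h ha))
    have hHsub2 : xi '' Set.Iio κ.ord ⊆ H₁ := by
      rintro _ ⟨i, hi, rfl⟩
      exact hxiH i hi
    have hHcard2 : #(xi '' Set.Iio κ.ord) = Cardinal.lift.{1} κ := by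
      rw [Cardinal.mk_image_eq_of_injOn _ _ hinj, Ordinal.mk_Iio_ordinal, Cardinal.card_ord]
    refine ⟨xi '' Set.Iio κ.ord, ⟨hHsub2.trans hH₁sub, hHcard2⟩, ?_⟩
    have hkey : ∀ X ∈ subBig κ (xi '' Set.Iio κ.ord), c X = α₀ := by
      intro X hX
      have hXH₁ : X ⊆ H₁ := hX.1.trans hHsub2
      have hXbig : X ∈ bigSets κ := ⟨hXH₁.trans hH₁sub, hX.2⟩
      have hXinf : X.Infinite := by
        rw [← Set.infinite_coe_iff, Cardinal.infinite_iff, hX.2]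
        exact hliftκinf
      obtain ⟨A, hAX, hAcard, hAmin⟩ := firstn X hXinf n
      have hAn : A ∈ nSets κ n := ⟨(hAX.trans hXH₁).trans hH₁sub, hAcard⟩
      have hAH₁ : A ⊆ H₁ := hAX.trans hXH₁
      obtain ⟨hABQ, hABdisj⟩ := hBQ A ⟨hAn, hAH₁⟩
      have hBX : Bof A ∩ X = ∅ := by
        by_contra hBX
        obtain ⟨x, hxB, hxX⟩ := Set.nonempty_iff_ne_empty.mpr hBX
        obtain ⟨j, hj, rfl⟩ := hX.1 hxX
        by_cases hcase : A ⊆ xi '' Set.Iio j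
        · obtain ⟨s, hs⟩ := exists_tuple_range hcase hAcard
          apply (main j hj).2
          rw [hF]
          apply Set.mem_union_left
          refine Set.mem_iUnion.mpr ⟨s, ?_⟩
          rw [hs]
          exact hxB
        · obtain ⟨a, haA, hanot⟩ := Set.not_subset.mp hcase
          obtain ⟨l, hl, hal⟩ := hX.1 (hAX haA)
          have hjl : j ≤ l := by
            by_contra h
            push_neg at h
            exact hanot ⟨l, h, hal⟩
          have hxja : xi j ≤ a := by
            rcases eq_or_lt_of_le hjl with h | h
            · rw [← hal, ← h]
            · rw [← hal]
              exact (hmono j l h hl).le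
          have hxA : xi j ∈ A := by
            by_contra hxA
            exact absurd (hAmin (xi j) hxX hxA a haA) (not_lt.mpr hxja)
          exact Set.disjoint_left.mp hABdisj hxA hxB
      have hXin : X ∈ {X ∈ bigSets κ | ∃ p ∈ Q α₀, Matches X p.1 p.2} :=
        ⟨hXbig, (A, Bof A), hABQ, hAX, hBX⟩
      rw [← (hQ α₀ hα₀lam).2] at hXin
      exact hXin.2
    intro X hX Y hY
    rw [hkey X hX, hkey Y hY]
end

section
/- Let κ be a Ramsey cardinal, i.e., an uncountable cardinal such that for every coloring c : [κ]^{<ω} → 2 there is H ∈ [κ]^κ with c constant on [H]^n for every n ∈ ω. Then every set in Σ([κ]^{<ω}, [κ]^{<κ}) is Ramsey. -/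
open Set Cardinal

universe u

section Aux

open Classical in
/-- Choose, for a finite set `a`, the second component of some pattern in `Q`
whose first component is `a` (or `∅` if there is none). -/
noncomputable def chooseB (Q : Set (Set Ordinal.{0} × Set Ordinal.{0}))
    (a : Set Ordinal.{0}) : Set Ordinal.{0} :=
  if h : ∃ p ∈ Q, p.1 = a then h.choose.2 else ∅

lemma chooseB_spec {Q : Set (Set Ordinal.{0} × Set Ordinal.{0})} {a : Set Ordinal.{0}}
    (h : ∃ p ∈ Q, p.1 = a) : ∃ p ∈ Q, p.1 = a ∧ p.2 = chooseB Q a := by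
  refine ⟨h.choose, h.choose_spec.1, h.choose_spec.2, ?_⟩
  rw [chooseB, dif_pos h]

open Classical in
/-- Coloring: is `a` the first component of some pattern in `Q`? -/
noncomputable def colorA (Q : Set (Set Ordinal.{0} × Set Ordinal.{0}))
    (a : Set Ordinal.{0}) : Fin 2 :=
  if ∃ p ∈ Q, p.1 = a then 1 else 0

open Classical in
/-- Coloring: is the top element of `b` in the chosen `B`-set of the rest of `b`? -/
noncomputable def colorB (Q : Set (Set Ordinal.{0} × Set Ordinal.{0}))
    (b : Set Ordinal.{0}) : Fin 2 :=
  if sSup b ∈ chooseB Q (b \ {sSup b}) then 1 else 0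

lemma exists_of_colorA_eq_one {Q : Set (Set Ordinal.{0} × Set Ordinal.{0})}
    {a : Set Ordinal.{0}} (h : colorA Q a = 1) : ∃ p ∈ Q, p.1 = a := by
  by_contra hc
  rw [colorA, if_neg hc] at h
  exact absurd h (by decide)

lemma colorB_eq_one_iff {Q : Set (Set Ordinal.{0} × Set Ordinal.{0})}
    {b : Set Ordinal.{0}} : colorB Q b = 1 ↔ sSup b ∈ chooseB Q (b \ {sSup b}) := by
  classical
  by_cases h : sSup b ∈ chooseB Q (b \ {sSup b})
  · rw [colorB, if_pos h]; simp [h]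
  · rw [colorB, if_neg h]; simp [h]

/-- Every infinite set of ordinals has a "first `n` elements" initial segment. -/
lemma exists_initialSeg (X : Set Ordinal.{0}) (hX : X.Infinite) (n : ℕ) :
    ∃ a : Set Ordinal.{0}, a ⊆ X ∧ a.Finite ∧ #a = (n : Cardinal.{1}) ∧
      ∀ x ∈ X \ a, ∀ y ∈ a, y < x := by
  induction n with
  | zero => exact ⟨∅, Set.empty_subset _, Set.finite_empty, by simp, by simp⟩
  | succ n ih =>
    obtain ⟨a, haX, hafin, hacard, halt⟩ := ih
    have hne : (X \ a).Nonempty := (hX.diff hafin).nonempty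
    obtain ⟨m, hm, hmin⟩ := Ordinal.lt_wf.has_min (X \ a) hne
    refine ⟨insert m a, Set.insert_subset hm.1 haX, hafin.insert m, ?_, ?_⟩
    · rw [Cardinal.mk_insert hm.2, hacard]
      exact (Nat.cast_add_one n).symm
    · intro x hx y hy
      have hxa : x ∉ a := fun h => hx.2 (Set.mem_insert_iff.mpr (Or.inr h))
      rcases Set.mem_insert_iff.mp hy with rfl | hy'
      · exact lt_of_le_of_ne (not_lt.mp (hmin x ⟨hx.1, hxa⟩))
          (fun h => hx.2 (h ▸ Set.mem_insert _ _))
      · exact halt x ⟨hx.1, hxa⟩ y hy'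

lemma sSup_insert_of_lt {a : Set Ordinal.{0}} {x : Ordinal.{0}} (hfin : a.Finite)
    (h : ∀ y ∈ a, y < x) : sSup (insert x a) = x := by
  apply le_antisymm
  · refine csSup_le (Set.insert_nonempty x a) ?_
    rintro y (rfl | hy)
    · exact le_rfl
    · exact (h y hy).le
  · exact le_csSup (hfin.insert x).bddAbove (Set.mem_insert x a)

end Aux

/-- Let `κ` be a Ramsey cardinal: an uncountable cardinal such
that every `c : [κ]^{<ω} → 2` admits `H ∈ [κ]^κ` with `c` constant on `[H]^n`
for every `n ∈ ω`.  Then every set in `Σ([κ]^{<ω}, [κ]^{<κ})` is Ramsey. -/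
theorem statement10 (κ : Cardinal.{0}) (hκ : ℵ₀ < κ)
    (hram : ∀ c : Set Ordinal.{0} → Fin 2,
      ∃ H ∈ bigSets κ, ∀ n : ℕ,
        ∀ A₁ ∈ nSets κ n, ∀ A₂ ∈ nSets κ n, A₁ ⊆ H → A₂ ⊆ H → c A₁ = c A₂) :
    ∀ S ∈ SigmaFam κ (finSets κ) (smallSets κ κ), IsRamsey κ S := by
  classical
  intro S hS
  obtain ⟨Q, hQ, rfl⟩ := hS
  have hκ' : ℵ₀ ≤ Cardinal.lift.{1} κ := by
    have := Cardinal.lift_le.{1}.mpr hκ.le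
    simpa using this
  obtain ⟨H₂, hH₂big, hom₂⟩ := hram (colorB Q)
  obtain ⟨hH₂sub, hH₂card⟩ := hH₂big
  have hIio : #(Set.Iio κ.ord) = Cardinal.lift.{1} κ := by
    rw [Ordinal.mk_Iio_ordinal, Cardinal.card_ord]
  obtain ⟨g⟩ := Cardinal.eq.mp (hIio.trans hH₂card.symm)
  set e : Ordinal.{0} → Ordinal.{0} :=
    fun o => if h : o ∈ Set.Iio κ.ord then (g ⟨o, h⟩ : Ordinal) else 0 with he_def
  have he_mem : ∀ o ∈ Set.Iio κ.ord, e o ∈ H₂ := by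
    intro o ho
    simp only [he_def, dif_pos ho]
    exact (g ⟨o, ho⟩).2
  have heInj : Set.InjOn e (Set.Iio κ.ord) := by
    intro x hx y hy hxy
    simp only [he_def, dif_pos hx, dif_pos hy] at hxy
    have := g.injective (Subtype.coe_injective hxy)
    exact congrArg Subtype.val this
  obtain ⟨H₁, hH₁big, hom₁⟩ := hram (fun A => colorA Q (e '' A))
  obtain ⟨hH₁sub, hH₁card⟩ := hH₁big
  set H : Set Ordinal.{0} := e '' H₁ with hH_def
  have hHsub2 : H ⊆ H₂ := by
    rintro _ ⟨y, hy, rfl⟩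
    exact he_mem y (hH₁sub hy)
  have hHsubIio : H ⊆ Set.Iio κ.ord := fun x hx => hH₂sub (hHsub2 hx)
  have hHcard : #H = Cardinal.lift.{1} κ := by
    rw [hH_def, Cardinal.mk_image_eq_of_injOn e H₁ (heInj.mono hH₁sub), hH₁card]
  have hHbig : H ∈ bigSets κ := ⟨hHsubIio, hHcard⟩
  have hHinf : H.Infinite := by
    rw [← Set.infinite_coe_iff]
    exact Cardinal.infinite_iff.mpr (le_of_le_of_eq hκ' hHcard.symm)
  have homA : ∀ n : ℕ, ∀ A₁, A₁ ⊆ H → #A₁ = (n : Cardinal.{1}) →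
      ∀ A₂, A₂ ⊆ H → #A₂ = (n : Cardinal.{1}) → colorA Q A₁ = colorA Q A₂ := by
    intro n A₁ hs₁ hc₁ A₂ hs₂ hc₂
    have key : ∀ A, A ⊆ H → e '' (H₁ ∩ e ⁻¹' A) = A := by
      intro A hA
      apply Set.Subset.antisymm
      · rintro _ ⟨y, hy, rfl⟩
        exact hy.2
      · intro x hx
        obtain ⟨y, hy, rfl⟩ := hA hx
        exact ⟨y, ⟨hy, hx⟩, rfl⟩
    have cardeq : ∀ A, A ⊆ H → #(H₁ ∩ e ⁻¹' A : Set Ordinal.{0}) = #A := by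
      intro A hA
      conv_rhs => rw [← key A hA]
      exact (Cardinal.mk_image_eq_of_injOn e _
        (heInj.mono (fun y hy => hH₁sub hy.1))).symm
    have h := hom₁ n (H₁ ∩ e ⁻¹' A₁)
      ⟨Set.inter_subset_left.trans hH₁sub, (cardeq A₁ hs₁).trans hc₁⟩
      (H₁ ∩ e ⁻¹' A₂)
      ⟨Set.inter_subset_left.trans hH₁sub, (cardeq A₂ hs₂).trans hc₂⟩
      Set.inter_subset_left Set.inter_subset_left
    simpa only [key A₁ hs₁, key A₂ hs₂] using h
  have homB : ∀ n : ℕ, ∀ A₁, A₁ ⊆ H → #A₁ = (n : Cardinal.{1}) →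
      ∀ A₂, A₂ ⊆ H → #A₂ = (n : Cardinal.{1}) → colorB Q A₁ = colorB Q A₂ := by
    intro n A₁ hs₁ hc₁ A₂ hs₂ hc₂
    exact hom₂ n A₁ ⟨hs₁.trans hHsubIio, hc₁⟩ A₂ ⟨hs₂.trans hHsubIio, hc₂⟩
      (hs₁.trans hHsub2) (hs₂.trans hHsub2)
  by_cases hA : ∃ p ∈ Q, p.1 ⊆ H
  · obtain ⟨p₀, hp₀Q, hp₀H⟩ := hA
    obtain ⟨n, hn⟩ := Cardinal.lt_aleph0.mp (hQ p₀ hp₀Q).1.2.lt_aleph0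
    have hpat : ∀ a, a ⊆ H → #a = (n : Cardinal.{1}) → ∃ p ∈ Q, p.1 = a := by
      intro a hsub hcard
      have h1 : colorA Q p₀.1 = 1 := by
        rw [colorA, if_pos ⟨p₀, hp₀Q, rfl⟩]
      have h2 := homA n a hsub hcard p₀.1 hp₀H hn
      exact exists_of_colorA_eq_one (h2.trans h1)
    obtain ⟨b₀, hb₀H, hb₀fin, hb₀card, hb₀lt⟩ := exists_initialSeg H hHinf (n+1)
    have hcolorB : ∀ a, a ⊆ H → a.Finite → ∀ x, x ∉ a → (∀ y ∈ a, y < x) →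
        (colorB Q (insert x a) = 1 ↔ x ∈ chooseB Q a) := by
      intro a hsub hfin x hxa hlt
      have h1 : sSup (insert x a) = x := sSup_insert_of_lt hfin hlt
      have h2 : insert x a \ {sSup (insert x a)} = a := by
        rw [h1]
        exact Set.insert_diff_self_of_notMem hxa
      rw [colorB_eq_one_iff, h2, h1]
    by_cases hv : colorB Q b₀ = 1
    · exfalso
      obtain ⟨a, haH, hafin, hacard, halt⟩ := exists_initialSeg H hHinf n
      obtain ⟨p, hpQ, hp1, hp2⟩ := chooseB_spec (hpat a haH hacard)
      have hsmall : #(p.2 : Set Ordinal.{0}) < Cardinal.lift.{1} κ := (hQ p hpQ).2.1.2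
      have hsubB : H \ a ⊆ chooseB Q a := by
        intro z hz
        have hlt : ∀ y ∈ a, y < z := halt z hz
        have hcard' : #(insert z a : Set Ordinal.{0}) = ((n+1 : ℕ) : Cardinal.{1}) := by
          rw [Cardinal.mk_insert hz.2, hacard]
          exact (Nat.cast_add_one n).symm
        have hh := homB (n+1) (insert z a) (Set.insert_subset hz.1 haH) hcard'
          b₀ hb₀H hb₀card
        exact (hcolorB a haH hafin z hz.2 hlt).mp (hh.trans hv)
      have h1 : Cardinal.lift.{1} κ ≤ #(H \ a : Set Ordinal.{0}) := by
        by_contra hcon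
        push_neg at hcon
        have hu : H ⊆ a ∪ (H \ a) := fun x hx => by
          by_cases hxa : x ∈ a
          · exact Or.inl hxa
          · exact Or.inr ⟨hx, hxa⟩
        have h2 := (Cardinal.mk_le_mk_of_subset hu).trans (Cardinal.mk_union_le _ _)
        have h3 : #(a : Set Ordinal.{0}) + #(H \ a : Set Ordinal.{0}) <
            Cardinal.lift.{1} κ := by
          refine Cardinal.add_lt_of_lt hκ' ?_ hcon
          rw [hacard]
          exact (Cardinal.nat_lt_aleph0 n).trans_le hκ'
        rw [hHcard] at h2
        exact absurd (h2.trans_lt h3) (lt_irrefl _)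
      have h2 : #(H \ a : Set Ordinal.{0}) ≤ #(p.2 : Set Ordinal.{0}) := by
        refine Cardinal.mk_le_mk_of_subset ?_
        rw [hp2]
        exact hsubB
      exact absurd ((h1.trans h2).trans_lt hsmall) (lt_irrefl _)
    · refine ⟨H, hHbig, Or.inl ?_⟩
      intro X hX
      obtain ⟨hXH, hXcard⟩ := hX
      have hXinf : X.Infinite := by
        rw [← Set.infinite_coe_iff]
        exact Cardinal.infinite_iff.mpr (le_of_le_of_eq hκ' hXcard.symm)
      obtain ⟨a, haX, hafin, hacard, halt⟩ := exists_initialSeg X hXinf n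
      have haH : a ⊆ H := haX.trans hXH
      obtain ⟨p, hpQ, hp1, hp2⟩ := chooseB_spec (hpat a haH hacard)
      refine ⟨⟨hXH.trans hHsubIio, hXcard⟩, p, hpQ, ?_, ?_⟩
      · rw [hp1]
        exact haX
      · apply Set.eq_empty_iff_forall_notMem.mpr
        rintro z ⟨hzB, hzX⟩
        by_cases hza : z ∈ a
        · refine Set.disjoint_left.mp (hQ p hpQ).2.2 ?_ hzB
          rw [hp1]
          exact hza
        · have hlt : ∀ y ∈ a, y < z := halt z ⟨hzX, hza⟩
          have hcard' : #(insert z a : Set Ordinal.{0}) = ((n+1 : ℕ) : Cardinal.{1}) := by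
            rw [Cardinal.mk_insert hza, hacard]
            exact (Nat.cast_add_one n).symm
          have hhom := homB (n+1) (insert z a) (Set.insert_subset (hXH hzX) haH) hcard'
            b₀ hb₀H hb₀card
          have hne1 : colorB Q (insert z a) ≠ 1 := by
            rw [hhom]
            exact hv
          refine hne1 ((hcolorB a haH hafin z hza hlt).mpr ?_)
          rw [← hp2]
          exact hzB
  · refine ⟨H, hHbig, Or.inr ?_⟩
    apply Set.eq_empty_iff_forall_notMem.mpr
    rintro X ⟨hX1, hX2⟩
    obtain ⟨_, p, hpQ, hm⟩ := hX2
    exact hA ⟨p, hpQ, hm.1.trans hX1.1⟩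
end
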